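/- arXiv:1711.10145 — 4 statements merged into one kernel-verified Lean document; each statement's English description precedes it below -/
import Mathlib

section
/- Let X be a discrete random variable with support of size ℓ and Shannon entropy H(X) ≥ log₂ ℓ - a for some a ≥ 0. For γ ∈ (0,1], let S = {x : p(x) ≤ 2^((a+1)/γ)/ℓ}. Then P(X ∈ S) ≥ 1 - γ. -/
lemma aux_tlog (t : ℝ) (ht : 0 < t) : t * Real.log (1/t) ≤ (Real.exp 1)⁻¹ := by
  have he : (0:ℝ) < Real.exp 1 := Real.exp_pos 1
  have h1 : (0:ℝ) < 1/(t * Real.exp 1) := by positivity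
  have h := Real.log_le_sub_one_of_pos h1
  rw [one_div, Real.log_inv, Real.log_mul (ne_of_gt ht) (ne_of_gt he), Real.log_exp] at h
  have h2 : -Real.log t ≤ (t * Real.exp 1)⁻¹ := by linarith
  have h3 : t * (-Real.log t) ≤ t * (t*Real.exp 1)⁻¹ := mul_le_mul_of_nonneg_left h2 ht.le
  have h4 : t * (t*Real.exp 1)⁻¹ = (Real.exp 1)⁻¹ := by field_simp
  rw [one_div, Real.log_inv]
  linarith

/-- If `X` has support of size `ℓ` and entropy `H(X) ≥ log₂ ℓ - a`, then the set
`S = {x : p(x) ≤ 2^((a+1)/γ)/ℓ}` has probability at least `1 - γ`. -/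
theorem stmt6 {Ω : Type*} [Fintype Ω] (p : Ω → ℝ) (a γ : ℝ) (ℓ : ℕ)
    (hp : ∀ ω, 0 ≤ p ω) (hsum : ∑ ω, p ω = 1)
    (ha : 0 ≤ a) (hγ0 : 0 < γ) (hγ1 : γ ≤ 1)
    (hℓ : ℓ = (Finset.univ.filter (fun ω => p ω ≠ 0)).card)
    (hent : Real.logb 2 ℓ - a ≤ ∑ ω, p ω * Real.logb 2 (1 / p ω)) :
    1 - γ ≤ ∑ ω ∈ Finset.univ.filter (fun ω => p ω ≤ (2:ℝ)^((a+1)/γ) / ℓ), p ω := by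
  classical
  set c : ℝ := (2:ℝ)^((a+1)/γ) with hc
  have hc0 : 0 < c := Real.rpow_pos_of_pos two_pos _
  have hℓ0 : 0 < ℓ := by
    rw [hℓ, Finset.card_pos]
    by_contra hne
    rw [Finset.not_nonempty_iff_eq_empty, Finset.filter_eq_empty_iff] at hne
    have hz : ∑ ω, p ω = 0 := Finset.sum_eq_zero (fun ω _ => by
      have := hne (Finset.mem_univ ω); push_neg at this; exact this)
    linarith
  have hℓR : (0:ℝ) < (ℓ:ℝ) := Nat.cast_pos.mpr hℓ0
  have hlog2 : (0:ℝ) < Real.log 2 := Real.log_pos one_lt_two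
  -- entropy inequality in natural log
  have hent' : Real.log ℓ - a * Real.log 2 ≤ ∑ ω, p ω * Real.log (1 / p ω) := by
    have h1 := mul_le_mul_of_nonneg_right hent hlog2.le
    rw [Finset.sum_mul] at h1
    calc Real.log ℓ - a * Real.log 2 = (Real.logb 2 ℓ - a) * Real.log 2 := by
          rw [Real.logb, sub_mul, div_mul_cancel₀ _ (ne_of_gt hlog2)]
      _ ≤ ∑ ω, p ω * Real.logb 2 (1/p ω) * Real.log 2 := h1
      _ = ∑ ω, p ω * Real.log (1/p ω) := by
          apply Finset.sum_congr rfl; intro ω _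
          rw [Real.logb, mul_assoc, div_mul_cancel₀ _ (ne_of_gt hlog2)]
  set f : Ω → ℝ := fun ω => p ω * Real.log (1 / (p ω * ℓ)) with hfdef
  have hf_key : ∀ ω, f ω = p ω * Real.log (1/p ω) - p ω * Real.log ℓ := by
    intro ω
    rcases eq_or_lt_of_le (hp ω) with h0 | h0
    · simp [hfdef, ← h0]
    · simp only [hfdef]
      rw [one_div, one_div, Real.log_inv, Real.log_inv,
        Real.log_mul (ne_of_gt h0) (ne_of_gt hℓR)]
      ring
  have hsumf : -(a * Real.log 2) ≤ ∑ ω, f ω := by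
    have he : ∑ ω, f ω = (∑ ω, p ω * Real.log (1/p ω)) - Real.log ℓ := by
      simp only [hf_key]
      rw [Finset.sum_sub_distrib, ← Finset.sum_mul, hsum, one_mul]
    linarith
  set S := Finset.univ.filter (fun ω => p ω ≤ c / ℓ) with hSdef
  set T := Finset.univ.filter (fun ω => ¬ (p ω ≤ c / ℓ)) with hTdef
  have hsplitp : ∑ ω ∈ S, p ω + ∑ ω ∈ T, p ω = 1 := by
    rw [hSdef, hTdef, Finset.sum_filter_add_sum_filter_not]; exact hsum
  have hsplitf : ∑ ω, f ω = ∑ ω ∈ S, f ω + ∑ ω ∈ T, f ω := by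
    rw [hSdef, hTdef, Finset.sum_filter_add_sum_filter_not]
  -- bound on T
  have hT : ∑ ω ∈ T, f ω ≤ -((a+1)/γ * Real.log 2) * ∑ ω ∈ T, p ω := by
    rw [Finset.mul_sum]
    apply Finset.sum_le_sum
    intro ω hω
    rw [hTdef, Finset.mem_filter] at hω
    have hω' : c / ℓ < p ω := not_le.mp hω.2
    have hpω : 0 < p ω := lt_trans (div_pos hc0 hℓR) hω'
    have h1 : c < p ω * ℓ := (div_lt_iff₀ hℓR).mp hω'
    have h2 : Real.log (1/(p ω * ℓ)) ≤ Real.log (1/c) :=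
      Real.log_le_log (by positivity) (one_div_le_one_div_of_le hc0 h1.le)
    have h3 : Real.log (1/c) = -((a+1)/γ * Real.log 2) := by
      rw [one_div, Real.log_inv, hc, Real.log_rpow two_pos]
    calc f ω ≤ p ω * Real.log (1/c) := mul_le_mul_of_nonneg_left h2 hpω.le
      _ = -((a+1)/γ * Real.log 2) * p ω := by rw [h3]; ring
  -- bound on S
  have hS : ∑ ω ∈ S, f ω ≤ (Real.exp 1)⁻¹ := by
    have hsub : ∑ ω ∈ S, f ω = ∑ ω ∈ S.filter (fun ω => p ω ≠ 0), f ω := by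
      refine (Finset.sum_subset (Finset.filter_subset _ _) ?_).symm
      intro x hx hxn
      rw [Finset.mem_filter] at hxn
      push_neg at hxn
      have : p x = 0 := hxn hx
      simp [hfdef, this]
    rw [hsub]
    have hcard : ((S.filter (fun ω => p ω ≠ 0)).card : ℝ) ≤ (ℓ : ℝ) := by
      rw [hℓ]
      exact_mod_cast Finset.card_le_card (fun x hx => by
        simp only [Finset.mem_filter, hSdef] at hx ⊢
        exact ⟨Finset.mem_univ x, hx.2⟩)
    calc ∑ ω ∈ S.filter (fun ω => p ω ≠ 0), f ω
        ≤ ∑ ω ∈ S.filter (fun ω => p ω ≠ 0), (Real.exp 1)⁻¹ / ℓ := by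
          apply Finset.sum_le_sum
          intro ω hω
          rw [Finset.mem_filter] at hω
          have hpω : 0 < p ω := lt_of_le_of_ne (hp ω) (Ne.symm hω.2)
          have ht := aux_tlog (p ω * ℓ) (by positivity)
          have heq : f ω = (p ω * ℓ * Real.log (1 / (p ω * ℓ))) / ℓ := by
            simp only [hfdef]; field_simp
          rw [heq]
          gcongr
      _ = ((S.filter (fun ω => p ω ≠ 0)).card : ℝ) * ((Real.exp 1)⁻¹ / ℓ) := by
          rw [Finset.sum_const, nsmul_eq_mul]
      _ ≤ (ℓ : ℝ) * ((Real.exp 1)⁻¹ / ℓ) := by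
          apply mul_le_mul_of_nonneg_right hcard (by positivity)
      _ = (Real.exp 1)⁻¹ := by field_simp
  -- conclude
  by_contra hcon
  push_neg at hcon
  have hPT : γ < ∑ ω ∈ T, p ω := by linarith
  have hpos : 0 < (a+1)/γ * Real.log 2 := by positivity
  have h4 : (a+1) * Real.log 2 < ((a+1)/γ * Real.log 2) * ∑ ω ∈ T, p ω := by
    have := mul_lt_mul_of_pos_left hPT hpos
    have heq : ((a+1)/γ * Real.log 2) * γ = (a+1) * Real.log 2 := by
      field_simp
    linarith
  have hfin : (Real.exp 1)⁻¹ < Real.log 2 := by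
    have h1 := Real.exp_one_gt_d9
    have h2 := Real.log_two_gt_d9
    have h5 : (Real.exp 1)⁻¹ < (2.7182818283 : ℝ)⁻¹ := by
      apply inv_strictAnti₀ (by norm_num) h1
    have h6 : (2.7182818283 : ℝ)⁻¹ < 0.6931471803 := by norm_num
    linarith
  linarith
end

section
/- Let Y = (Y₁,...,Y_ℓ) be a random variable with values in {0,1}^ℓ and define bias_i(Y) = P(Y_i = 0) - P(Y_i = 1). If there is a set S ⊆ [ℓ] such that the average over i ∈ S of bias_i(Y) is at least 2γ for some γ > 0, then H(Y) ≤ ℓ - γ²·|S|. -/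
open Real Finset


/-- `log(1+b) - log(1-b) ≥ 2b` for `b ∈ [0,1)`. -/
lemma aux_logdiff {b : ℝ} (hb0 : 0 ≤ b) (hb1 : b < 1) :
    2 * b ≤ Real.log (1 + b) - Real.log (1 - b) := by
  set g : ℝ → ℝ := fun x => Real.log (1 + x) - Real.log (1 - x) - 2 * x with hg
  have hd : ∀ x ∈ Set.Ioo (0:ℝ) b, HasDerivAt g (1/(1+x) - (-1)/(1-x) - 2) x := by
    intro x hx
    have hx0 : (0:ℝ) < x := hx.1
    have hx1 : x < 1 := lt_of_lt_of_le hx.2 hb1.le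
    have h1 : HasDerivAt (fun x : ℝ => Real.log (1 + x)) (1/(1+x)) x := by
      have := ((hasDerivAt_id x).const_add 1).log (by positivity)
      simpa using this
    have h2 : HasDerivAt (fun x : ℝ => Real.log (1 - x)) ((-1)/(1-x)) x := by
      have := ((hasDerivAt_id x).const_sub 1).log (by simp only [id]; intro h; nlinarith)
      simpa using this
    have h3 : HasDerivAt (fun x : ℝ => 2 * x) 2 x := by
      simpa using (hasDerivAt_id x).const_mul 2
    exact (h1.sub h2).sub h3
  have hmono : MonotoneOn g (Set.Icc 0 b) := by
    apply monotoneOn_of_deriv_nonneg (convex_Icc 0 b)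
    · apply ContinuousOn.sub
      apply ContinuousOn.sub
      · apply ContinuousOn.log (by fun_prop)
        intro x hx; simp only [Set.mem_Icc] at hx; nlinarith
      · apply ContinuousOn.log (by fun_prop)
        intro x hx; simp only [Set.mem_Icc] at hx
        nlinarith [lt_of_le_of_lt hx.2 hb1]
      · fun_prop
    · intro x hx
      rw [interior_Icc] at hx
      exact (hd x hx).differentiableAt.differentiableWithinAt
    · intro x hx
      rw [interior_Icc] at hx
      rw [(hd x hx).deriv]
      have hx0 : (0:ℝ) < x := hx.1
      have hx1 : x < 1 := lt_of_lt_of_le hx.2 hb1.le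
      have h1 : (0:ℝ) < 1 + x := by linarith
      have h2 : (0:ℝ) < 1 - x := by linarith
      have e1 : (0:ℝ) < (1+x)*(1-x) := by nlinarith
      rw [div_sub_div _ _ h1.ne' h2.ne']
      rw [sub_nonneg, le_div_iff₀ e1]
      nlinarith
  have h0 : g 0 ≤ g b := hmono (Set.mem_Icc.2 ⟨le_refl 0, hb0⟩) (Set.mem_Icc.2 ⟨hb0, le_refl b⟩) hb0
  simp [hg] at h0
  linarith


/-- binary entropy Pinsker-type bound, for a ∈ [1/2, 1]. -/
lemma aux_binent_half {a : ℝ} (h0 : 1/2 ≤ a) (h1 : a ≤ 1) :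
    Real.binEntropy a ≤ Real.log 2 * (1 - (2*a-1)^2/2) := by
  rcases eq_or_lt_of_le h1 with h1 | h1
  · subst h1
    simp [Real.binEntropy]
    nlinarith [Real.log_pos (by norm_num : (1:ℝ) < 2)]
  set F : ℝ → ℝ := fun x => Real.log 2 * (1 - (2*x-1)^2/2) - Real.binEntropy x with hF
  have hd : ∀ x ∈ Set.Ioo (1/2 : ℝ) a, HasDerivAt F
      (Real.log 2 * (-(2*(2*x-1)^1*2/2)) - (Real.log (1-x) - Real.log x)) x := by
    intro x hx
    have hx0 : (0:ℝ) < x := lt_trans (by norm_num) hx.1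
    have hx1 : x < 1 := lt_of_lt_of_le hx.2 h1.le
    have h2 : HasDerivAt (fun x : ℝ => 2*x-1) 2 x := by
      simpa using ((hasDerivAt_id x).const_mul 2).sub_const 1
    have h3 : HasDerivAt (fun x : ℝ => Real.log 2 * (1 - (2*x-1)^2/2))
        (Real.log 2 * (-(2*(2*x-1)^1*2/2))) x := by
      exact (((h2.pow 2).div_const 2).const_sub 1).const_mul (Real.log 2)
    exact h3.sub (Real.hasDerivAt_binEntropy hx0.ne' hx1.ne)
  have hmono : MonotoneOn F (Set.Icc (1/2 : ℝ) a) := by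
    apply monotoneOn_of_deriv_nonneg (convex_Icc _ _)
    · apply ContinuousOn.sub (by fun_prop)
      exact Real.binEntropy_continuous.continuousOn
    · intro x hx
      rw [interior_Icc] at hx
      exact (hd x hx).differentiableAt.differentiableWithinAt
    · intro x hx
      rw [interior_Icc] at hx
      rw [(hd x hx).deriv]
      have hx0 : (1/2:ℝ) < x := hx.1
      have hx1 : x < 1 := lt_of_lt_of_le hx.2 h1.le
      -- key: log x - log (1-x) ≥ 2 log 2 (2x-1)
      have hb0 : (0:ℝ) ≤ 2*x-1 := by linarith
      have hb1 : 2*x-1 < 1 := by linarith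
      have hkey := aux_logdiff hb0 hb1
      have e1 : (1:ℝ) + (2*x-1) = 2*x := by ring
      have e2 : (1:ℝ) - (2*x-1) = 2*(1-x) := by ring
      rw [e1, e2, Real.log_mul (by norm_num) (ne_of_gt (by linarith : (0:ℝ) < x)),
        Real.log_mul (by norm_num) (ne_of_gt (by linarith : (0:ℝ) < 1 - x))] at hkey
      have hl2 : Real.log 2 ≤ 1 := by
        have := Real.log_le_sub_one_of_pos (by norm_num : (0:ℝ) < 2); linarith
      have hl2p : 0 < Real.log 2 := Real.log_pos (by norm_num)
      ring_nf
      nlinarith [mul_le_mul_of_nonneg_right hl2 hb0]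
  have h0 : F (1/2) ≤ F a :=
    hmono (Set.mem_Icc.2 ⟨le_refl _, h0⟩) (Set.mem_Icc.2 ⟨h0, le_refl a⟩) h0
  have : F (1/2) = 0 := by
    have : Real.binEntropy (1/2 : ℝ) = Real.log 2 := by
      rw [show (1/2 : ℝ) = 2⁻¹ by norm_num, Real.binEntropy_two_inv]
    norm_num [hF, this]
  rw [this] at h0
  simp [hF] at h0
  linarith

lemma aux_binent {a : ℝ} (h0 : 0 ≤ a) (h1 : a ≤ 1) :
    Real.binEntropy a ≤ Real.log 2 * (1 - (2*a-1)^2/2) := by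
  rcases le_or_gt (1/2 : ℝ) a with h | h
  · exact aux_binent_half h h1
  · have := aux_binent_half (a := 1 - a) (by linarith) (by linarith)
    rw [Real.binEntropy_one_sub] at this
    calc Real.binEntropy a ≤ Real.log 2 * (1 - (2*(1-a)-1)^2/2) := this
      _ = Real.log 2 * (1 - (2*a-1)^2/2) := by ring_nf


lemma aux_coord {a : ℝ} (h0 : 0 ≤ a) (h1 : a ≤ 1) :
    -(a * Real.logb 2 a + (1-a) * Real.logb 2 (1-a)) ≤ 1 - (2*a-1)^2/2 := by
  have hl2 : 0 < Real.log 2 := Real.log_pos (by norm_num)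
  have hb := aux_binent h0 h1
  have he : Real.binEntropy a = -(a * Real.log a + (1-a) * Real.log (1-a)) := by
    simp [Real.binEntropy, Real.log_inv]; ring
  rw [he] at hb
  rw [Real.logb, Real.logb]
  rw [show -(a * (Real.log a / Real.log 2) + (1-a) * (Real.log (1-a) / Real.log 2))
      = -(a * Real.log a + (1-a) * Real.log (1-a)) / Real.log 2 by ring]
  rw [div_le_iff₀ hl2]
  nlinarith


/-- If the average over `i ∈ S` of `bias_i(Y) = P(Y_i=0) - P(Y_i=1)` is at least `2γ`,
then `H(Y) ≤ ℓ - γ²|S|`. -/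
theorem stmt7 {ℓ : ℕ} (p : (Fin ℓ → Bool) → ℝ) (γ : ℝ) (S : Finset (Fin ℓ))
    (hp : ∀ y, 0 ≤ p y) (hsum : ∑ y, p y = 1)
    (hγ : 0 < γ) (hS : S.Nonempty)
    (hbias : 2 * γ ≤ (∑ i ∈ S,
        ((∑ y ∈ Finset.univ.filter (fun y : Fin ℓ → Bool => y i = false), p y)
          - ∑ y ∈ Finset.univ.filter (fun y : Fin ℓ → Bool => y i = true), p y)) / S.card) :
    -∑ y, p y * Real.logb 2 (p y) ≤ (ℓ : ℝ) - γ^2 * S.card := by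
  classical
  set q : Fin ℓ → Bool → ℝ :=
    fun i b => ∑ y ∈ Finset.univ.filter (fun y : Fin ℓ → Bool => y i = b), p y with hq
  have hbias' : 2 * γ ≤ (∑ i ∈ S, (q i false - q i true)) / S.card := by
    simpa only [hq] using hbias
  have hqnn : ∀ i b, 0 ≤ q i b := fun i b => Finset.sum_nonneg fun y _ => hp y
  have hqtot : ∀ i, q i false + q i true = 1 := by
    intro i
    rw [← hsum,
      ← Finset.sum_filter_add_sum_filter_not Finset.univ (fun y : Fin ℓ → Bool => y i = false) p]
    congr 1
    apply Finset.sum_congr _ (fun _ _ => rfl)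
    ext y; simp
  have hqle : ∀ i (y : Fin ℓ → Bool), p y ≤ q i (y i) := by
    intro i y
    exact Finset.single_le_sum (fun z _ => hp z) (by simp)
  set Q : (Fin ℓ → Bool) → ℝ := fun y => ∏ i, q i (y i) with hQ
  have hQnn : ∀ y, 0 ≤ Q y := fun y => Finset.prod_nonneg fun i _ => hqnn i (y i)
  have hQsum : ∑ y, Q y = 1 := by
    calc ∑ y, Q y = ∏ i, ∑ b, q i b := (Fintype.prod_sum _).symm
      _ = 1 := by
        apply Finset.prod_eq_one
        intro i _
        rw [Fintype.sum_bool, add_comm]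
        exact hqtot i
  have hl2 : 0 < Real.log 2 := Real.log_pos (by norm_num)
  -- Gibbs' inequality
  have key : ∀ y, p y * Real.logb 2 (Q y) - p y * Real.logb 2 (p y)
      ≤ (Q y - p y) / Real.log 2 := by
    intro y
    rcases eq_or_lt_of_le (hp y) with h | h
    · rw [← h]
      simp only [zero_mul, sub_zero, mul_zero, sub_self]
      exact div_nonneg (by simpa using hQnn y) hl2.le
    · have hQpos : 0 < Q y := Finset.prod_pos fun i _ => lt_of_lt_of_le h (hqle i y)
      have hlog := Real.log_le_sub_one_of_pos (div_pos hQpos h)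
      rw [Real.log_div hQpos.ne' h.ne'] at hlog
      have h2 : p y * (Real.log (Q y) - Real.log (p y)) ≤ Q y - p y := by
        have h3 := mul_le_mul_of_nonneg_left hlog (hp y)
        calc p y * (Real.log (Q y) - Real.log (p y)) ≤ p y * (Q y / p y - 1) := h3
          _ = Q y - p y := by field_simp
      rw [Real.logb, Real.logb,
        show p y * (Real.log (Q y) / Real.log 2) - p y * (Real.log (p y) / Real.log 2)
          = (p y * (Real.log (Q y) - Real.log (p y))) / Real.log 2 by ring]
      gcongr
  have gibbs : -∑ y, p y * Real.logb 2 (p y) ≤ -∑ y, p y * Real.logb 2 (Q y) := by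
    have hs := Finset.sum_le_sum (fun y (_ : y ∈ Finset.univ) => key y)
    rw [Finset.sum_sub_distrib] at hs
    rw [← Finset.sum_div, Finset.sum_sub_distrib, hQsum, hsum] at hs
    simp only [sub_self, zero_div] at hs
    linarith
  -- Factorization of the product entropy
  have hfact : -∑ y, p y * Real.logb 2 (Q y)
      = ∑ i, -(q i false * Real.logb 2 (q i false) + q i true * Real.logb 2 (q i true)) := by
    have h1 : ∀ y : Fin ℓ → Bool,
        p y * Real.logb 2 (Q y) = ∑ i, p y * Real.logb 2 (q i (y i)) := by
      intro y
      rcases eq_or_lt_of_le (hp y) with h | h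
      · rw [← h]; simp
      · rw [hQ]
        simp only
        rw [Real.logb_prod _ _ (fun i _ => (lt_of_lt_of_le h (hqle i y)).ne'),
          Finset.mul_sum]
    rw [Finset.sum_congr rfl fun y _ => h1 y, Finset.sum_comm,
      show (∑ i : Fin ℓ, -(q i false * Real.logb 2 (q i false)
          + q i true * Real.logb 2 (q i true)))
        = -∑ i : Fin ℓ, (q i false * Real.logb 2 (q i false)
          + q i true * Real.logb 2 (q i true)) by rw [Finset.sum_neg_distrib]]
    congr 1
    apply Finset.sum_congr rfl
    intro i _
    rw [← Finset.sum_filter_add_sum_filter_not Finset.univ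
      (fun y : Fin ℓ → Bool => y i = false)]
    have hfilt : Finset.univ.filter (fun y : Fin ℓ → Bool => ¬ y i = false)
        = Finset.univ.filter (fun y : Fin ℓ → Bool => y i = true) := by
      ext y; simp
    rw [hfilt]
    congr 1
    · rw [Finset.sum_congr rfl (fun y hy => by
        rw [(Finset.mem_filter.1 hy).2]), ← Finset.sum_mul]
    · rw [Finset.sum_congr rfl (fun y hy => by
        rw [(Finset.mem_filter.1 hy).2]), ← Finset.sum_mul]
  -- per-coordinate entropy bound
  have hcoord : ∀ i, -(q i false * Real.logb 2 (q i false) + q i true * Real.logb 2 (q i true))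
      ≤ 1 - (q i false - q i true)^2/2 := by
    intro i
    have h1 : q i true = 1 - q i false := by linarith [hqtot i]
    have h2 := aux_coord (hqnn i false) (by linarith [hqtot i, hqnn i true])
    rw [h1]
    calc -(q i false * Real.logb 2 (q i false)
          + (1 - q i false) * Real.logb 2 (1 - q i false))
        ≤ 1 - (2 * q i false - 1)^2/2 := h2
      _ = 1 - (q i false - (1 - q i false))^2/2 := by ring
  -- summation and Cauchy-Schwarz
  have hcard : (0:ℝ) < S.card := by exact_mod_cast Finset.card_pos.2 hS
  have hbias2 : 2 * γ * S.card ≤ ∑ i ∈ S, (q i false - q i true) := by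
    rw [le_div_iff₀ hcard] at hbias'
    linarith
  have hcs := sq_sum_le_card_mul_sum_sq (s := S) (f := fun i => q i false - q i true)
  have hbnn : (0:ℝ) ≤ 2 * γ * S.card := by positivity
  have h4 : 4 * γ^2 * S.card^2 ≤ S.card * ∑ i ∈ S, (q i false - q i true)^2 := by
    calc 4 * γ^2 * S.card^2 = (2 * γ * S.card)^2 := by ring
      _ ≤ (∑ i ∈ S, (q i false - q i true))^2 := by nlinarith
      _ ≤ S.card * ∑ i ∈ S, (q i false - q i true)^2 := hcs
  have h5 : 2 * γ^2 * S.card ≤ ∑ i ∈ S, (q i false - q i true)^2 / 2 := by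
    rw [← Finset.sum_div, le_div_iff₀ (by norm_num : (0:ℝ) < 2)]
    have := mul_le_mul_of_nonneg_left h4 (le_of_lt (inv_pos.2 hcard))
    rw [show (S.card:ℝ)⁻¹ * (4 * γ^2 * S.card^2) = 4 * γ^2 * S.card * (S.card * (S.card:ℝ)⁻¹) by ring,
      show ((S.card:ℝ))⁻¹ * ((S.card:ℝ) * ∑ i ∈ S, (q i false - q i true)^2)
        = ((S.card:ℝ)⁻¹ * S.card) * ∑ i ∈ S, (q i false - q i true)^2 by ring,
      mul_inv_cancel₀ hcard.ne', inv_mul_cancel₀ hcard.ne', mul_one, one_mul] at this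
    linarith
  calc -∑ y, p y * Real.logb 2 (p y)
      ≤ -∑ y, p y * Real.logb 2 (Q y) := gibbs
    _ = ∑ i, -(q i false * Real.logb 2 (q i false) + q i true * Real.logb 2 (q i true)) := hfact
    _ ≤ ∑ i : Fin ℓ, (1 - (q i false - q i true)^2/2) := Finset.sum_le_sum fun i _ => hcoord i
    _ = (ℓ:ℝ) - ∑ i : Fin ℓ, (q i false - q i true)^2/2 := by
        rw [Finset.sum_sub_distrib]; simp
    _ ≤ (ℓ:ℝ) - ∑ i ∈ S, (q i false - q i true)^2/2 := by
        exact sub_le_sub_left (Finset.sum_le_sum_of_subset_of_nonneg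
          (Finset.subset_univ S) (fun i _ _ => by positivity)) _
    _ ≤ (ℓ:ℝ) - γ^2 * S.card := by nlinarith
end

section
/- Let X = (X₁,...,Xₙ) and Y = (Y₁,...,Yₙ) be random variables such that the pairs (X₁,Y₁),...,(Xₙ,Yₙ) are mutually independent, and let R be an arbitrary random variable on the same space. Then the sum over i of the conditional mutual informations I(X_i ; R | X_{<i}, Y_{≥i}) is at most I(X ; R | Y). -/
open Classical in
/-- Probability of an event `E` under a weight function `p` on a finite sample space. -/
noncomputable def pr {Ω : Type*} [Fintype Ω] (p : Ω → ℝ) (E : Ω → Prop) : ℝ :=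
  ∑ ω, if E ω then p ω else 0

/-- Shannon entropy (in bits) of the random variable `f` under the distribution `p`. -/
noncomputable def ent {Ω α : Type*} [Fintype Ω] [Fintype α] (p : Ω → ℝ) (f : Ω → α) : ℝ :=
  -∑ z : α, pr p (fun ω => f ω = z) * Real.logb 2 (pr p (fun ω => f ω = z))

/-- Conditional entropy `H(f | g) = H(f, g) - H(g)`. -/
noncomputable def condEnt {Ω α β : Type*} [Fintype Ω] [Fintype α] [Fintype β]
    (p : Ω → ℝ) (f : Ω → α) (g : Ω → β) : ℝ :=
  ent p (fun ω => (f ω, g ω)) - ent p g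

/-- Conditional mutual information `I(f ; g | h) = H(f | h) - H(f | g, h)`. -/
noncomputable def condMI {Ω α β δ : Type*} [Fintype Ω] [Fintype α] [Fintype β] [Fintype δ]
    (p : Ω → ℝ) (f : Ω → α) (g : Ω → β) (h : Ω → δ) : ℝ :=
  condEnt p f h - condEnt p f (fun ω => (g ω, h ω))

section Helpers
variable {Ω : Type*} [Fintype Ω] (p : Ω → ℝ)

variable {Ω : Type*} [Fintype Ω] (p : Ω → ℝ)

lemma pr_congr {E E' : Ω → Prop} (h : ∀ ω, E ω ↔ E' ω) : pr p E = pr p E' := by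
  classical
  unfold pr; exact Finset.sum_congr rfl fun ω _ => if_congr (h ω) rfl rfl

lemma pr_nonneg (hp : ∀ ω, 0 ≤ p ω) (E : Ω → Prop) : 0 ≤ pr p E := by
  classical
  refine Finset.sum_nonneg fun ω _ => ?_
  split <;> simp [hp ω]

lemma pr_empty {E : Ω → Prop} (h : ∀ ω, ¬ E ω) : pr p E = 0 := by
  unfold pr
  refine Finset.sum_eq_zero fun ω _ => by simp [h ω]

lemma pr_mono (hp : ∀ ω, 0 ≤ p ω) {E E' : Ω → Prop} (h : ∀ ω, E ω → E' ω) :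
    pr p E ≤ pr p E' := by
  classical
  refine Finset.sum_le_sum fun ω _ => ?_
  by_cases hE : E ω
  · simp [hE, h ω hE]
  · simp only [hE, if_false]
    split <;> simp [hp ω]

open Classical in
lemma pr_comp {ι : Type*} [Fintype ι] (Q : ι → Prop) (v : Ω → ι) :
    pr p (fun ω => Q (v ω)) = ∑ x, if Q x then pr p (fun ω => v ω = x) else 0 := by
  classical
  unfold pr
  have : ∀ x : ι, (if Q x then ∑ ω, if v ω = x then p ω else 0 else 0)
      = ∑ ω, if Q x ∧ v ω = x then p ω else 0 := by
    intro x
    by_cases hQ : Q x <;> simp [hQ]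
  simp only [this]
  rw [Finset.sum_comm]
  refine Finset.sum_congr rfl fun ω _ => ?_
  rw [Finset.sum_eq_single (v ω)]
  · by_cases hQ : Q (v ω) <;> simp [hQ]
  · intro x _ hx; simp [Ne.symm hx]
  · simp

lemma pr_marg {β : Type*} [Fintype β] (E : Ω → Prop) (g : Ω → β) :
    pr p E = ∑ b, pr p (fun ω => E ω ∧ g ω = b) := by
  classical
  unfold pr
  rw [Finset.sum_comm]
  refine Finset.sum_congr rfl fun ω _ => ?_
  rw [Finset.sum_eq_single (g ω)]
  · by_cases hE : E ω <;> simp [hE]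
  · intro b _ hb; simp [Ne.symm hb]
  · simp

lemma pr_total (hsum : ∑ ω, p ω = 1) {α : Type*} [Fintype α] (f : Ω → α) :
    ∑ a, pr p (fun ω => f ω = a) = 1 := by
  classical
  unfold pr
  rw [Finset.sum_comm]
  rw [← hsum]
  refine Finset.sum_congr rfl fun ω _ => ?_
  rw [Finset.sum_eq_single (f ω)] <;> simp +contextual [eq_comm]


lemma ent_congr_inj {α α' : Type*} [Fintype α] [Fintype α'] {f : Ω → α} {e : α → α'}
    (he : ∀ ω₁ ω₂, e (f ω₁) = e (f ω₂) → f ω₁ = f ω₂) :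
    ent p (fun ω => e (f ω)) = ent p f := by
  classical
  unfold ent
  congr 1
  set G : ℝ → ℝ := fun t => t * Real.logb 2 t with hG
  have hG0 : G 0 = 0 := by simp [hG]
  set s : Finset α := Finset.univ.image f with hs
  have hR : ∑ z : α, G (pr p (fun ω => f ω = z)) = ∑ z ∈ s, G (pr p (fun ω => f ω = z)) := by
    refine (Finset.sum_subset (Finset.subset_univ s) fun z _ hz => ?_).symm
    have : pr p (fun ω => f ω = z) = 0 := by
      refine pr_empty p fun ω hω => hz ?_
      exact Finset.mem_image.2 ⟨ω, Finset.mem_univ ω, hω⟩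
    rw [this, hG0]
  have hs' : Finset.univ.image (fun ω => e (f ω)) = s.image e := by
    rw [hs, Finset.image_image]; rfl
  have hL : ∑ z' : α', G (pr p (fun ω => e (f ω) = z'))
      = ∑ z' ∈ s.image e, G (pr p (fun ω => e (f ω) = z')) := by
    refine (Finset.sum_subset (Finset.subset_univ _) fun z' _ hz' => ?_).symm
    have : pr p (fun ω => e (f ω) = z') = 0 := by
      refine pr_empty p fun ω hω => hz' ?_
      rw [← hs']
      exact Finset.mem_image.2 ⟨ω, Finset.mem_univ ω, hω⟩
    rw [this, hG0]
  rw [hR, hL, Finset.sum_image ?inj]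
  case inj =>
    intro z₁ h₁ z₂ h₂ hee
    obtain ⟨ω₁, -, rfl⟩ := Finset.mem_image.1 h₁
    obtain ⟨ω₂, -, rfl⟩ := Finset.mem_image.1 h₂
    exact he ω₁ ω₂ hee
  refine Finset.sum_congr rfl fun z hz => ?_
  obtain ⟨ω₀, -, rfl⟩ := Finset.mem_image.1 hz
  congr 1
  refine pr_congr p fun ω => ⟨fun h => he ω ω₀ h, fun h => by rw [h]⟩

lemma condEnt_congr_inj {α γ γ' : Type*} [Fintype α] [Fintype γ] [Fintype γ']
    {f : Ω → α} {g : Ω → γ} {e : γ → γ'}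
    (he : ∀ ω₁ ω₂, e (g ω₁) = e (g ω₂) → g ω₁ = g ω₂) :
    condEnt p f (fun ω => e (g ω)) = condEnt p f g := by
  unfold condEnt
  rw [ent_congr_inj p he]
  congr 1
  have := ent_congr_inj p (f := fun ω => (f ω, g ω)) (e := fun x => (x.1, e x.2))
    (fun ω₁ ω₂ h => by
      simp only [Prod.mk.injEq] at h ⊢
      exact ⟨h.1, he ω₁ ω₂ h.2⟩)
  simpa using this

end Helpers

set_option linter.unusedSectionVars false
section CMI
variable {Ω α β δ : Type*} [Fintype Ω] [Fintype α] [Fintype β] [Fintype δ]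

/-- joint distribution of a triple -/
noncomputable def q3 (p : Ω → ℝ) (f : Ω → α) (g : Ω → β) (h : Ω → δ) (x : α × β × δ) : ℝ :=
  pr p (fun ω => f ω = x.1 ∧ g ω = x.2.1 ∧ h ω = x.2.2)

/-- joint distribution of a pair -/
noncomputable def m2 {α' δ' : Type*} (p : Ω → ℝ) (f : Ω → α') (h : Ω → δ') (a : α') (c : δ') : ℝ :=
  pr p (fun ω => f ω = a ∧ h ω = c)

variable (p : Ω → ℝ) (f : Ω → α) (g : Ω → β) (h : Ω → δ)

lemma sum_q3_b (a : α) (c : δ) : m2 p f h a c = ∑ b, q3 p f g h (a, b, c) := by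
  rw [m2, pr_marg p _ g]
  refine Finset.sum_congr rfl fun b _ => pr_congr p fun ω => ?_
  show (f ω = a ∧ h ω = c) ∧ g ω = b ↔ f ω = a ∧ g ω = b ∧ h ω = c
  tauto

lemma sum_q3_a (b : β) (c : δ) : m2 p g h b c = ∑ a, q3 p f g h (a, b, c) := by
  rw [m2, pr_marg p _ f]
  refine Finset.sum_congr rfl fun a _ => pr_congr p fun ω => ?_
  show (g ω = b ∧ h ω = c) ∧ f ω = a ↔ f ω = a ∧ g ω = b ∧ h ω = c
  tauto

lemma sum_m2_f (c : δ) : pr p (fun ω => h ω = c) = ∑ a, m2 p f h a c := by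
  rw [pr_marg p _ f]
  refine Finset.sum_congr rfl fun a _ => pr_congr p fun ω => ?_
  show h ω = c ∧ f ω = a ↔ f ω = a ∧ h ω = c
  tauto

lemma ent_third : ent p h
    = -∑ x : α × β × δ, q3 p f g h x * Real.logb 2 (pr p (fun ω => h ω = x.2.2)) := by
  rw [ent]
  congr 1
  calc ∑ c, pr p (fun ω => h ω = c) * Real.logb 2 (pr p fun ω => h ω = c)
      = ∑ c, ∑ a, ∑ b, q3 p f g h (a, b, c) * Real.logb 2 (pr p fun ω => h ω = c) := by
        refine Finset.sum_congr rfl fun c _ => ?_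
        rw [sum_m2_f p f h c, Finset.sum_mul]
        refine Finset.sum_congr rfl fun a _ => ?_
        rw [sum_q3_b p f g h a c, Finset.sum_mul]
    _ = ∑ a, ∑ c, ∑ b, q3 p f g h (a, b, c) * Real.logb 2 (pr p fun ω => h ω = c) :=
        Finset.sum_comm
    _ = ∑ a, ∑ b, ∑ c, q3 p f g h (a, b, c) * Real.logb 2 (pr p fun ω => h ω = c) :=
        Finset.sum_congr rfl fun a _ => Finset.sum_comm
    _ = ∑ x : α × β × δ, q3 p f g h x * Real.logb 2 (pr p fun ω => h ω = x.2.2) := by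
        simp only [Fintype.sum_prod_type]

lemma ent_pair_fh : ent p (fun ω => (f ω, h ω))
    = -∑ x : α × β × δ, q3 p f g h x * Real.logb 2 (m2 p f h x.1 x.2.2) := by
  rw [ent]
  congr 1
  have hev : ∀ z : α × δ, pr p (fun ω => (f ω, h ω) = z) = m2 p f h z.1 z.2 := by
    intro z; rw [m2]; exact pr_congr p fun ω => by simp [Prod.ext_iff]
  simp only [hev]
  calc ∑ z : α × δ, m2 p f h z.1 z.2 * Real.logb 2 (m2 p f h z.1 z.2)
      = ∑ a, ∑ c, m2 p f h a c * Real.logb 2 (m2 p f h a c) := by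
        simp only [Fintype.sum_prod_type]
    _ = ∑ a, ∑ c, ∑ b, q3 p f g h (a, b, c) * Real.logb 2 (m2 p f h a c) := by
        refine Finset.sum_congr rfl fun a _ => Finset.sum_congr rfl fun c _ => ?_
        rw [sum_q3_b p f g h a c, Finset.sum_mul]
    _ = ∑ a, ∑ b, ∑ c, q3 p f g h (a, b, c) * Real.logb 2 (m2 p f h a c) :=
        Finset.sum_congr rfl fun a _ => Finset.sum_comm
    _ = ∑ x : α × β × δ, q3 p f g h x * Real.logb 2 (m2 p f h x.1 x.2.2) := by
        simp only [Fintype.sum_prod_type]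

lemma ent_pair_gh : ent p (fun ω => (g ω, h ω))
    = -∑ x : α × β × δ, q3 p f g h x * Real.logb 2 (m2 p g h x.2.1 x.2.2) := by
  rw [ent]
  congr 1
  have hev : ∀ z : β × δ, pr p (fun ω => (g ω, h ω) = z) = m2 p g h z.1 z.2 := by
    intro z; rw [m2]; exact pr_congr p fun ω => by simp [Prod.ext_iff]
  simp only [hev]
  calc ∑ z : β × δ, m2 p g h z.1 z.2 * Real.logb 2 (m2 p g h z.1 z.2)
      = ∑ b, ∑ c, m2 p g h b c * Real.logb 2 (m2 p g h b c) := by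
        simp only [Fintype.sum_prod_type]
    _ = ∑ b, ∑ c, ∑ a, q3 p f g h (a, b, c) * Real.logb 2 (m2 p g h b c) := by
        refine Finset.sum_congr rfl fun b _ => Finset.sum_congr rfl fun c _ => ?_
        rw [sum_q3_a p f g h b c, Finset.sum_mul]
    _ = ∑ b, ∑ a, ∑ c, q3 p f g h (a, b, c) * Real.logb 2 (m2 p g h b c) :=
        Finset.sum_congr rfl fun b _ => Finset.sum_comm
    _ = ∑ a, ∑ b, ∑ c, q3 p f g h (a, b, c) * Real.logb 2 (m2 p g h b c) :=
        Finset.sum_comm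
    _ = ∑ x : α × β × δ, q3 p f g h x * Real.logb 2 (m2 p g h x.2.1 x.2.2) := by
        simp only [Fintype.sum_prod_type]

lemma ent_triple : ent p (fun ω => (f ω, (g ω, h ω)))
    = -∑ x : α × β × δ, q3 p f g h x * Real.logb 2 (q3 p f g h x) := by
  rw [ent]
  congr 1
  refine Finset.sum_congr rfl fun x _ => ?_
  have hev : pr p (fun ω => (f ω, (g ω, h ω)) = x) = q3 p f g h x := by
    rw [q3]; exact pr_congr p fun ω => by simp [Prod.ext_iff]
  rw [hev]

lemma condMI_eq : condMI p f g h = ∑ x : α × β × δ,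
    q3 p f g h x * (Real.logb 2 (q3 p f g h x) + Real.logb 2 (pr p (fun ω => h ω = x.2.2))
      - Real.logb 2 (m2 p f h x.1 x.2.2) - Real.logb 2 (m2 p g h x.2.1 x.2.2)) := by
  rw [condMI, condEnt, condEnt, ent_pair_fh p f g h, ent_third p f g h,
    ent_triple p f g h, ent_pair_gh p f g h]
  have h4 : ∀ A B C D : ℝ, -A - -B - (-C - -D) = (C + B) - (A + D) := by intros; ring
  rw [h4, ← Finset.sum_add_distrib, ← Finset.sum_add_distrib, ← Finset.sum_sub_distrib]
  exact Finset.sum_congr rfl fun x _ => by ring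

open Classical in
lemma condMI_nonneg (hp : ∀ ω, 0 ≤ p ω) (hsum : ∑ ω, p ω = 1) : 0 ≤ condMI p f g h := by
  classical
  rw [condMI_eq p f g h]
  have hL2 : (0:ℝ) < Real.log 2 := Real.log_pos one_lt_two
  set Q := q3 p f g h with hQ
  set PC : δ → ℝ := fun c => pr p (fun ω => h ω = c) with hPC
  set W : α × β × δ → ℝ := fun x =>
    if 0 < PC x.2.2 then m2 p f h x.1 x.2.2 * m2 p g h x.2.1 x.2.2 / PC x.2.2 else 0 with hW
  have key : ∀ x : α × β × δ, (Q x - W x) / Real.log 2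
      ≤ Q x * (Real.logb 2 (Q x) + Real.logb 2 (PC x.2.2)
          - Real.logb 2 (m2 p f h x.1 x.2.2) - Real.logb 2 (m2 p g h x.2.1 x.2.2)) := by
    intro x
    have hWnn : 0 ≤ W x := by
      simp only [hW]
      split_ifs with hc
      · exact div_nonneg (mul_nonneg (pr_nonneg p hp _) (pr_nonneg p hp _)) hc.le
      · exact le_refl 0
    by_cases hq : Q x = 0
    · rw [hq, zero_mul]
      apply div_nonpos_of_nonpos_of_nonneg _ hL2.le
      linarith
    · have hq0 : 0 < Q x := (pr_nonneg p hp _).lt_of_ne (Ne.symm hq)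
      have hpac : Q x ≤ m2 p f h x.1 x.2.2 := pr_mono p hp fun ω hw => ⟨hw.1, hw.2.2⟩
      have hpbc : Q x ≤ m2 p g h x.2.1 x.2.2 := pr_mono p hp fun ω hw => ⟨hw.2.1, hw.2.2⟩
      have hpc : Q x ≤ PC x.2.2 := pr_mono p hp fun ω hw => hw.2.2
      have hac0 : 0 < m2 p f h x.1 x.2.2 := lt_of_lt_of_le hq0 hpac
      have hbc0 : 0 < m2 p g h x.2.1 x.2.2 := lt_of_lt_of_le hq0 hpbc
      have hc0 : 0 < PC x.2.2 := lt_of_lt_of_le hq0 hpc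
      rw [hW]
      simp only [if_pos hc0]
      set A := m2 p f h x.1 x.2.2
      set B := m2 p g h x.2.1 x.2.2
      set C := PC x.2.2
      have hlog : Real.log (A * B / (Q x * C)) ≤ A * B / (Q x * C) - 1 :=
        Real.log_le_sub_one_of_pos (by positivity)
      have hexp : Real.log (A * B / (Q x * C))
          = Real.log A + Real.log B - Real.log (Q x) - Real.log C := by
        rw [Real.log_div (by positivity) (by positivity), Real.log_mul (by positivity) (by positivity),
          Real.log_mul (by positivity) (by positivity)]
        ring
      rw [hexp] at hlog
      have hfield : Q x * (A * B / (Q x * C)) = A * B / C := by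
        field_simp
      have hmain : Q x - A * B / C
          ≤ Q x * (Real.log (Q x) + Real.log C - Real.log A - Real.log B) := by
        nlinarith [mul_le_mul_of_nonneg_left hlog hq0.le]
      calc (Q x - A * B / C) / Real.log 2
          ≤ Q x * (Real.log (Q x) + Real.log C - Real.log A - Real.log B) / Real.log 2 := by
            exact div_le_div_of_nonneg_right hmain hL2.le
        _ = Q x * (Real.logb 2 (Q x) + Real.logb 2 C - Real.logb 2 A - Real.logb 2 B) := by
            simp only [Real.logb]; ring
  have hQsum : ∑ x : α × β × δ, Q x = 1 := by
    rw [← pr_total p hsum (fun ω => (f ω, (g ω, h ω)))]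
    refine Finset.sum_congr rfl fun x _ => ?_
    rw [hQ, q3]
    exact (pr_congr p fun ω => by simp [Prod.ext_iff]).symm
  have hWsum : ∑ x : α × β × δ, W x ≤ 1 := by
    have flat : ∑ x : α × β × δ, W x
        = ∑ c, ∑ a, ∑ b, W (a, b, c) := by
      simp only [Fintype.sum_prod_type]
      have h1 : ∀ a : α, (∑ b : β, ∑ c : δ, W (a, b, c)) = ∑ c : δ, ∑ b : β, W (a, b, c) :=
        fun a => Finset.sum_comm
      simp only [h1]
      exact Finset.sum_comm
    rw [flat]
    have inner : ∀ c, (∑ a, ∑ b, W (a, b, c)) = if 0 < PC c then PC c else 0 := by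
      intro c
      by_cases hc : 0 < PC c
      · rw [if_pos hc]
        have : ∀ a b, W (a, b, c) = m2 p f h a c * (m2 p g h b c / PC c) := by
          intro a b; rw [hW]; simp only [if_pos hc]; ring
        simp only [this]
        have hb : ∀ a, (∑ b, m2 p f h a c * (m2 p g h b c / PC c))
            = m2 p f h a c * (PC c / PC c) := by
          intro a
          rw [← Finset.mul_sum, ← Finset.sum_div]
          rw [← sum_m2_f p g h c]
        simp only [hb]
        rw [← Finset.sum_mul, ← sum_m2_f p f h c, div_self (ne_of_gt hc), mul_one]
      · rw [if_neg hc]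
        refine Finset.sum_eq_zero fun a _ => Finset.sum_eq_zero fun b _ => ?_
        rw [hW]; simp only [if_neg hc]
    simp only [inner]
    rw [← pr_total p hsum h]
    refine Finset.sum_le_sum fun c _ => ?_
    split_ifs with hc
    · exact le_refl _
    · exact pr_nonneg p hp _
  calc (0:ℝ) ≤ (1 - ∑ x : α × β × δ, W x) / Real.log 2 := by
        apply div_nonneg _ hL2.le; linarith
    _ = ∑ x : α × β × δ, (Q x - W x) / Real.log 2 := by
        rw [← Finset.sum_div, Finset.sum_sub_distrib, hQsum]
    _ ≤ _ := Finset.sum_le_sum fun x _ => key x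

lemma condMI_eq_zero (hp : ∀ ω, 0 ≤ p ω)
    (hfact : ∀ x : α × β × δ, q3 p f g h x * pr p (fun ω => h ω = x.2.2)
      = m2 p f h x.1 x.2.2 * m2 p g h x.2.1 x.2.2) :
    condMI p f g h = 0 := by
  rw [condMI_eq p f g h]
  refine Finset.sum_eq_zero fun x _ => ?_
  by_cases hq : q3 p f g h x = 0
  · rw [hq, zero_mul]
  · have hq0 : 0 < q3 p f g h x := (pr_nonneg p hp _).lt_of_ne (Ne.symm hq)
    have hpac : q3 p f g h x ≤ m2 p f h x.1 x.2.2 := pr_mono p hp fun ω hw => ⟨hw.1, hw.2.2⟩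
    have hpbc : q3 p f g h x ≤ m2 p g h x.2.1 x.2.2 := pr_mono p hp fun ω hw => ⟨hw.2.1, hw.2.2⟩
    have hpc : q3 p f g h x ≤ pr p (fun ω => h ω = x.2.2) := pr_mono p hp fun ω hw => hw.2.2
    have h1 : Real.logb 2 (q3 p f g h x) + Real.logb 2 (pr p (fun ω => h ω = x.2.2))
        = Real.logb 2 (m2 p f h x.1 x.2.2) + Real.logb 2 (m2 p g h x.2.1 x.2.2) := by
      rw [← Real.logb_mul hq (ne_of_gt (lt_of_lt_of_le hq0 hpc)),
        ← Real.logb_mul (ne_of_gt (lt_of_lt_of_le hq0 hpac)) (ne_of_gt (lt_of_lt_of_le hq0 hpbc)),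
        hfact x]
    rw [show (Real.logb 2 (q3 p f g h x) + Real.logb 2 (pr p (fun ω => h ω = x.2.2))
      - Real.logb 2 (m2 p f h x.1 x.2.2) - Real.logb 2 (m2 p g h x.2.1 x.2.2)) = 0 by linarith]
    rw [mul_zero]

end CMI

section Rect
set_option linter.unusedSectionVars false
variable {Ω α β : Type*} [Fintype Ω] [Fintype α] [Fintype β] {n : ℕ}

open Classical in
lemma pr_rect (p : Ω → ℝ) (X : Fin n → Ω → α) (Y : Fin n → Ω → β)
    (hindep : ∀ (a : Fin n → α) (b : Fin n → β),
      pr p (fun ω => ∀ i, X i ω = a i ∧ Y i ω = b i)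
        = ∏ i, pr p (fun ω => X i ω = a i ∧ Y i ω = b i))
    (φ : Fin n → α → Prop) (ψ : Fin n → β → Prop) :
    pr p (fun ω => ∀ j, φ j (X j ω) ∧ ψ j (Y j ω))
      = ∏ j, pr p (fun ω => φ j (X j ω) ∧ ψ j (Y j ω)) := by
  classical
  have e1 : pr p (fun ω => ∀ j, φ j (X j ω) ∧ ψ j (Y j ω))
      = pr p (fun ω => (fun t : Fin n → α × β => ∀ j, φ j (t j).1 ∧ ψ j (t j).2)
          ((fun j => (X j ω, Y j ω)))) := pr_congr p fun ω => Iff.rfl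
  rw [e1, pr_comp p (fun t : Fin n → α × β => ∀ j, φ j (t j).1 ∧ ψ j (t j).2)
    (fun ω => (fun j => (X j ω, Y j ω)))]
  have hpoint : ∀ t : Fin n → α × β, pr p (fun ω => (fun j => (X j ω, Y j ω)) = t)
      = ∏ j, pr p (fun ω => X j ω = (t j).1 ∧ Y j ω = (t j).2) := by
    intro t
    have : pr p (fun ω => (fun j => (X j ω, Y j ω)) = t)
        = pr p (fun ω => ∀ j, X j ω = (t j).1 ∧ Y j ω = (t j).2) :=
      pr_congr p fun ω => by
        rw [funext_iff]
        exact forall_congr' fun j => Prod.ext_iff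
    rw [this]
    exact hindep (fun j => (t j).1) (fun j => (t j).2)
  simp only [hpoint]
  have e2 : ∀ j, pr p (fun ω => φ j (X j ω) ∧ ψ j (Y j ω))
      = ∑ u : α × β, if φ j u.1 ∧ ψ j u.2 then
          pr p (fun ω => X j ω = u.1 ∧ Y j ω = u.2) else 0 := by
    intro j
    have h0 : pr p (fun ω => φ j (X j ω) ∧ ψ j (Y j ω))
        = pr p (fun ω => (fun u : α × β => φ j u.1 ∧ ψ j u.2) ((X j ω, Y j ω))) :=
      pr_congr p fun ω => Iff.rfl
    rw [h0, pr_comp p (fun u : α × β => φ j u.1 ∧ ψ j u.2) (fun ω => (X j ω, Y j ω))]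
    refine Finset.sum_congr rfl fun u _ => ?_
    split_ifs with hu
    · exact pr_congr p fun ω => Prod.ext_iff
    · rfl
  simp only [e2]
  rw [Fintype.prod_sum]
  refine Finset.sum_congr rfl fun t _ => ?_
  by_cases hP : ∀ j, φ j (t j).1 ∧ ψ j (t j).2
  · rw [if_pos hP]
    exact Finset.prod_congr rfl fun j _ => (if_pos (hP j)).symm
  · rw [if_neg hP]
    push_neg at hP
    obtain ⟨j0, hj0⟩ := hP
    refine (Finset.prod_eq_zero (Finset.mem_univ j0) ?_).symm
    rw [if_neg]
    intro hc
    exact hj0 hc.1 hc.2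

end Rect

section Chain
set_option linter.unusedSectionVars false
variable {Ω α γ : Type*} [Fintype Ω] [Fintype α] [Fintype γ] {n : ℕ}

/-- prefix of `X` strictly below `m`, as an option-tuple -/
def pfx (X : Fin n → Ω → α) (m : ℕ) (ω : Ω) : Fin n → Option α :=
  fun j => if (j : ℕ) < m then some (X j ω) else none

lemma chain_step (p : Ω → ℝ) (X : Fin n → Ω → α) (W : Ω → γ) (m : ℕ) (hmn : m < n) :
    ent p (fun ω => (pfx X (m+1) ω, W ω))
      = ent p (fun ω => (X ⟨m, hmn⟩ ω, (pfx X m ω, W ω))) := by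
  classical
  have hinj : ∀ ω₁ ω₂ : Ω,
      (fun z : α × ((Fin n → Option α) × γ) =>
          ((fun j : Fin n => if (j:ℕ) = m then some z.1 else z.2.1 j), z.2.2))
        ((X ⟨m, hmn⟩ ω₁, (pfx X m ω₁, W ω₁)))
      = (fun z : α × ((Fin n → Option α) × γ) =>
          ((fun j : Fin n => if (j:ℕ) = m then some z.1 else z.2.1 j), z.2.2))
        ((X ⟨m, hmn⟩ ω₂, (pfx X m ω₂, W ω₂)))
      → (X ⟨m, hmn⟩ ω₁, (pfx X m ω₁, W ω₁)) = (X ⟨m, hmn⟩ ω₂, (pfx X m ω₂, W ω₂)) := by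
    intro ω₁ ω₂ hh
    simp only [Prod.mk.injEq] at hh ⊢
    obtain ⟨h1, h2⟩ := hh
    have hx : X ⟨m, hmn⟩ ω₁ = X ⟨m, hmn⟩ ω₂ := by
      have := congrFun h1 ⟨m, hmn⟩
      simpa using this
    refine ⟨hx, ?_, h2⟩
    funext j
    by_cases hj : (j : ℕ) = m
    · have : ¬ ((j : ℕ) < m) := by omega
      simp [pfx, this]
    · have := congrFun h1 j
      simpa [hj] using this
  have hpoint : (fun ω => ((fun j : Fin n => if (j:ℕ) = m then some (X ⟨m, hmn⟩ ω)
        else pfx X m ω j), W ω)) = (fun ω => (pfx X (m+1) ω, W ω)) := by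
    funext ω
    simp only [Prod.mk.injEq]
    refine ⟨funext fun j => ?_, trivial⟩
    by_cases hj : (j : ℕ) = m
    · have hj' : j = ⟨m, hmn⟩ := Fin.ext hj
      subst hj'
      simp [pfx]
    · simp only [hj, if_false, pfx]
      split_ifs <;> first | rfl | omega
  have := ent_congr_inj p (f := fun ω => (X ⟨m, hmn⟩ ω, (pfx X m ω, W ω)))
    (e := fun z : α × ((Fin n → Option α) × γ) =>
      ((fun j : Fin n => if (j:ℕ) = m then some z.1 else z.2.1 j), z.2.2)) hinj
  rw [← this]
  congr 1
  exact hpoint.symm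

lemma chain_full (p : Ω → ℝ) (X : Fin n → Ω → α) (W : Ω → γ) :
    ent p (fun ω => (pfx X n ω, W ω)) = ent p (fun ω => ((fun i => X i ω), W ω)) := by
  have hinj : ∀ ω₁ ω₂ : Ω,
      (fun z : (Fin n → α) × γ => ((fun j => some (z.1 j)), z.2)) ((fun i => X i ω₁), W ω₁)
        = (fun z : (Fin n → α) × γ => ((fun j => some (z.1 j)), z.2)) ((fun i => X i ω₂), W ω₂)
      → ((fun i => X i ω₁ : Fin n → α), W ω₁) = ((fun i => X i ω₂), W ω₂) := by
    intro ω₁ ω₂ hh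
    simp only [Prod.mk.injEq] at hh ⊢
    obtain ⟨h1, h2⟩ := hh
    refine ⟨funext fun j => ?_, h2⟩
    have := congrFun h1 j
    simpa using this
  have := ent_congr_inj p (f := fun ω => ((fun i => X i ω : Fin n → α), W ω))
    (e := fun z : (Fin n → α) × γ => ((fun j => some (z.1 j)), z.2)) hinj
  rw [← this]
  congr 1
  funext ω
  simp only [Prod.mk.injEq]
  refine ⟨funext fun j => ?_, trivial⟩
  simp [pfx, j.isLt]

lemma chain_base (p : Ω → ℝ) (X : Fin n → Ω → α) (W : Ω → γ) :
    ent p (fun ω => (pfx X 0 ω, W ω)) = ent p W := by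
  have hinj : ∀ ω₁ ω₂ : Ω,
      (fun w : γ => ((fun _ : Fin n => (none : Option α)), w)) (W ω₁)
        = (fun w : γ => ((fun _ : Fin n => (none : Option α)), w)) (W ω₂)
      → W ω₁ = W ω₂ := by
    intro ω₁ ω₂ hh
    exact congrArg Prod.snd hh
  have := ent_congr_inj p (f := W)
    (e := fun w : γ => ((fun _ : Fin n => (none : Option α)), w)) hinj
  have hpe : (fun ω => (pfx X 0 ω, W ω))
      = (fun ω => ((fun _ : Fin n => (none : Option α)), W ω)) := by
    funext ω
    simp only [Prod.mk.injEq]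
    exact ⟨funext fun j => by simp [pfx], trivial⟩
  rw [hpe]
  exact this

lemma chain_rule (p : Ω → ℝ) (X : Fin n → Ω → α) (W : Ω → γ) :
    condEnt p (fun ω => (fun i => X i ω)) W
      = ∑ i : Fin n, condEnt p (X i) (fun ω => (pfx X (i:ℕ) ω, W ω)) := by
  classical
  have main : ∀ m : ℕ, m ≤ n → ent p (fun ω => (pfx X m ω, W ω)) = ent p W +
      ∑ k ∈ Finset.range m, (if h : k < n then
        condEnt p (X ⟨k, h⟩) (fun ω => (pfx X k ω, W ω)) else 0) := by
    intro m
    induction m with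
    | zero => intro _; simp [chain_base p X W]
    | succ m ih =>
      intro hm1
      have hmn : m < n := lt_of_lt_of_le (Nat.lt_succ_self m) hm1
      rw [Finset.sum_range_succ, dif_pos hmn, chain_step p X W m hmn, condEnt,
        ih (le_of_lt hmn)]
      ring
  have hfin := main n (le_refl n)
  rw [chain_full p X W] at hfin
  rw [condEnt, hfin]
  rw [← Fin.sum_univ_eq_sum_range (fun k => if h : k < n then
    condEnt p (X ⟨k, h⟩) (fun ω => (pfx X k ω, W ω)) else 0) n]
  have : ∀ i : Fin n, (if h : (i:ℕ) < n then
      condEnt p (X ⟨(i:ℕ), h⟩) (fun ω => (pfx X (i:ℕ) ω, W ω)) else 0)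
      = condEnt p (X i) (fun ω => (pfx X (i:ℕ) ω, W ω)) := by
    intro i
    rw [dif_pos i.isLt]
  rw [Finset.sum_congr rfl fun i _ => this i]
  ring

end Chain

section Fact
set_option linter.unusedSectionVars false
variable {Ω α β : Type*} [Fintype Ω] [Fintype α] [Fintype β] {n : ℕ}

/-- suffix of `Y` from `m` on, as an option-tuple -/
def sfx (Y : Fin n → Ω → β) (m : ℕ) (ω : Ω) : Fin n → Option β :=
  fun j => if m ≤ (j : ℕ) then some (Y j ω) else none

def phi1 {n : ℕ} (i : Fin n) (a : α) (za : Fin n → Option α) : Fin n → α → Prop :=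
  fun j x => (if (j:ℕ) < (i:ℕ) then some x = za j else none = za j) ∧ ((j:ℕ) = (i:ℕ) → x = a)

def phi2 {n : ℕ} (i : Fin n) (za : Fin n → Option α) : Fin n → α → Prop :=
  fun j x => if (j:ℕ) < (i:ℕ) then some x = za j else none = za j

def psi1 {n : ℕ} (i : Fin n) (cc zb : Fin n → Option β) : Fin n → β → Prop :=
  fun j y => (if (j:ℕ) < (i:ℕ) then some y = cc j else none = cc j)
    ∧ (if (i:ℕ) ≤ (j:ℕ) then some y = zb j else none = zb j)

def psi2 {n : ℕ} (i : Fin n) (zb : Fin n → Option β) : Fin n → β → Prop :=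
  fun j y => if (i:ℕ) ≤ (j:ℕ) then some y = zb j else none = zb j

lemma fact_lemma (p : Ω → ℝ) (X : Fin n → Ω → α) (Y : Fin n → Ω → β)
    (hindep : ∀ (a : Fin n → α) (b : Fin n → β),
      pr p (fun ω => ∀ i, X i ω = a i ∧ Y i ω = b i)
        = ∏ i, pr p (fun ω => X i ω = a i ∧ Y i ω = b i))
    (i : Fin n)
    (x : α × (Fin n → Option β) × ((Fin n → Option α) × (Fin n → Option β))) :
    q3 p (X i) (fun ω => pfx Y (i:ℕ) ω) (fun ω => (pfx X (i:ℕ) ω, sfx Y (i:ℕ) ω)) x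
        * pr p (fun ω => (fun ω => (pfx X (i:ℕ) ω, sfx Y (i:ℕ) ω)) ω = x.2.2)
      = m2 p (X i) (fun ω => (pfx X (i:ℕ) ω, sfx Y (i:ℕ) ω)) x.1 x.2.2
        * m2 p (fun ω => pfx Y (i:ℕ) ω) (fun ω => (pfx X (i:ℕ) ω, sfx Y (i:ℕ) ω)) x.2.1 x.2.2 := by
  classical
  obtain ⟨a, cc, za, zb⟩ := x
  -- component-wise characterizations
  have hXa : ∀ ω, X i ω = a ↔ ∀ j : Fin n, ((j:ℕ) = (i:ℕ) → X j ω = a) := by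
    intro ω
    constructor
    · intro hx j hj
      have : j = i := Fin.ext hj
      rw [this]; exact hx
    · intro hh; exact hh i rfl
  have hza : ∀ ω, pfx X (i:ℕ) ω = za
      ↔ ∀ j : Fin n, (if (j:ℕ) < (i:ℕ) then some (X j ω) = za j else none = za j) := by
    intro ω
    rw [funext_iff]
    refine forall_congr' fun j => ?_
    by_cases hj : (j:ℕ) < (i:ℕ) <;> simp [pfx, hj]
  have hcc : ∀ ω, pfx Y (i:ℕ) ω = cc
      ↔ ∀ j : Fin n, (if (j:ℕ) < (i:ℕ) then some (Y j ω) = cc j else none = cc j) := by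
    intro ω
    rw [funext_iff]
    refine forall_congr' fun j => ?_
    by_cases hj : (j:ℕ) < (i:ℕ) <;> simp [pfx, hj]
  have hzb : ∀ ω, sfx Y (i:ℕ) ω = zb
      ↔ ∀ j : Fin n, (if (i:ℕ) ≤ (j:ℕ) then some (Y j ω) = zb j else none = zb j) := by
    intro ω
    rw [funext_iff]
    refine forall_congr' fun j => ?_
    by_cases hj : (i:ℕ) ≤ (j:ℕ) <;> simp [sfx, hj]
  -- the four events as rectangles
  have p1 : pr p (fun ω => X i ω = a ∧ pfx Y (i:ℕ) ω = cc ∧ (pfx X (i:ℕ) ω, sfx Y (i:ℕ) ω) = (za, zb))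
      = ∏ j, pr p (fun ω => phi1 i a za j (X j ω) ∧ psi1 i cc zb j (Y j ω)) := by
    rw [pr_congr p (E' := fun ω => ∀ j, phi1 i a za j (X j ω) ∧ psi1 i cc zb j (Y j ω)) ?_]
    · exact pr_rect p X Y hindep _ _
    · intro ω
      rw [hXa ω, hcc ω, Prod.mk.injEq, hza ω, hzb ω]
      simp only [phi1, psi1, forall_and]
      tauto
  have p2 : pr p (fun ω => (pfx X (i:ℕ) ω, sfx Y (i:ℕ) ω) = (za, zb))
      = ∏ j, pr p (fun ω => phi2 i za j (X j ω) ∧ psi2 i zb j (Y j ω)) := by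
    rw [pr_congr p (E' := fun ω => ∀ j, phi2 i za j (X j ω) ∧ psi2 i zb j (Y j ω)) ?_]
    · exact pr_rect p X Y hindep _ _
    · intro ω
      rw [Prod.mk.injEq, hza ω, hzb ω]
      simp only [phi2, psi2, forall_and]
      try tauto
  have p3 : pr p (fun ω => X i ω = a ∧ (pfx X (i:ℕ) ω, sfx Y (i:ℕ) ω) = (za, zb))
      = ∏ j, pr p (fun ω => phi1 i a za j (X j ω) ∧ psi2 i zb j (Y j ω)) := by
    rw [pr_congr p (E' := fun ω => ∀ j, phi1 i a za j (X j ω) ∧ psi2 i zb j (Y j ω)) ?_]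
    · exact pr_rect p X Y hindep _ _
    · intro ω
      rw [hXa ω, Prod.mk.injEq, hza ω, hzb ω]
      simp only [phi1, psi2, forall_and]
      tauto
  have p4 : pr p (fun ω => pfx Y (i:ℕ) ω = cc ∧ (pfx X (i:ℕ) ω, sfx Y (i:ℕ) ω) = (za, zb))
      = ∏ j, pr p (fun ω => phi2 i za j (X j ω) ∧ psi1 i cc zb j (Y j ω)) := by
    rw [pr_congr p (E' := fun ω => ∀ j, phi2 i za j (X j ω) ∧ psi1 i cc zb j (Y j ω)) ?_]
    · exact pr_rect p X Y hindep _ _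
    · intro ω
      rw [hcc ω, Prod.mk.injEq, hza ω, hzb ω]
      simp only [phi2, psi1, forall_and]
      tauto
  have key : ∀ j : Fin n,
      pr p (fun ω => phi1 i a za j (X j ω) ∧ psi1 i cc zb j (Y j ω))
        * pr p (fun ω => phi2 i za j (X j ω) ∧ psi2 i zb j (Y j ω))
      = pr p (fun ω => phi1 i a za j (X j ω) ∧ psi2 i zb j (Y j ω))
        * pr p (fun ω => phi2 i za j (X j ω) ∧ psi1 i cc zb j (Y j ω)) := by
    intro j
    by_cases hij : (j:ℕ) = (i:ℕ)
    · by_cases hcc2 : (none : Option β) = cc j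
      · have hψ : ∀ y, psi1 i cc zb j y ↔ psi2 i zb j y := by
          intro y
          unfold psi1 psi2
          rw [if_neg (by omega : ¬ ((j:ℕ) < (i:ℕ)))]
          exact and_iff_right hcc2
        have r1 : pr p (fun ω => phi1 i a za j (X j ω) ∧ psi1 i cc zb j (Y j ω))
            = pr p (fun ω => phi1 i a za j (X j ω) ∧ psi2 i zb j (Y j ω)) :=
          pr_congr p fun ω => and_congr_right fun _ => hψ _
        have r2 : pr p (fun ω => phi2 i za j (X j ω) ∧ psi1 i cc zb j (Y j ω))
            = pr p (fun ω => phi2 i za j (X j ω) ∧ psi2 i zb j (Y j ω)) :=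
          pr_congr p fun ω => and_congr_right fun _ => hψ _
        rw [r1, r2]
      · have z1 : pr p (fun ω => phi1 i a za j (X j ω) ∧ psi1 i cc zb j (Y j ω)) = 0 := by
          refine pr_empty p fun ω hw => hcc2 ?_
          have := hw.2.1
          rwa [if_neg (by omega : ¬ ((j:ℕ) < (i:ℕ)))] at this
        have z4 : pr p (fun ω => phi2 i za j (X j ω) ∧ psi1 i cc zb j (Y j ω)) = 0 := by
          refine pr_empty p fun ω hw => hcc2 ?_
          have := hw.2.1
          rwa [if_neg (by omega : ¬ ((j:ℕ) < (i:ℕ)))] at this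
        rw [z1, z4]
        ring
    · have hφ : ∀ x, phi1 i a za j x ↔ phi2 i za j x := by
        intro x
        unfold phi1 phi2
        constructor
        · exact And.left
        · exact fun hh => ⟨hh, fun hc => absurd hc hij⟩
      have r1 : pr p (fun ω => phi1 i a za j (X j ω) ∧ psi1 i cc zb j (Y j ω))
          = pr p (fun ω => phi2 i za j (X j ω) ∧ psi1 i cc zb j (Y j ω)) :=
        pr_congr p fun ω => and_congr_left fun _ => hφ _
      have r2 : pr p (fun ω => phi1 i a za j (X j ω) ∧ psi2 i zb j (Y j ω))
          = pr p (fun ω => phi2 i za j (X j ω) ∧ psi2 i zb j (Y j ω)) :=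
        pr_congr p fun ω => and_congr_left fun _ => hφ _
      rw [r1, r2]
      ring
  have e1 : q3 p (X i) (fun ω => pfx Y (i:ℕ) ω) (fun ω => (pfx X (i:ℕ) ω, sfx Y (i:ℕ) ω))
      (a, cc, (za, zb)) = pr p (fun ω => X i ω = a ∧ pfx Y (i:ℕ) ω = cc
        ∧ (pfx X (i:ℕ) ω, sfx Y (i:ℕ) ω) = (za, zb)) := rfl
  have e2 : pr p (fun ω => (fun ω => (pfx X (i:ℕ) ω, sfx Y (i:ℕ) ω)) ω = ((a, cc, (za, zb))
      : α × (Fin n → Option β) × ((Fin n → Option α) × (Fin n → Option β))).2.2)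
      = pr p (fun ω => (pfx X (i:ℕ) ω, sfx Y (i:ℕ) ω) = (za, zb)) := rfl
  have e3 : m2 p (X i) (fun ω => (pfx X (i:ℕ) ω, sfx Y (i:ℕ) ω)) a (za, zb)
      = pr p (fun ω => X i ω = a ∧ (pfx X (i:ℕ) ω, sfx Y (i:ℕ) ω) = (za, zb)) := rfl
  have e4 : m2 p (fun ω => pfx Y (i:ℕ) ω) (fun ω => (pfx X (i:ℕ) ω, sfx Y (i:ℕ) ω)) cc (za, zb)
      = pr p (fun ω => pfx Y (i:ℕ) ω = cc ∧ (pfx X (i:ℕ) ω, sfx Y (i:ℕ) ω) = (za, zb)) := rfl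
  calc q3 p (X i) (fun ω => pfx Y (i:ℕ) ω) (fun ω => (pfx X (i:ℕ) ω, sfx Y (i:ℕ) ω)) (a, cc, (za, zb))
        * pr p (fun ω => (fun ω => (pfx X (i:ℕ) ω, sfx Y (i:ℕ) ω)) ω = ((a, cc, (za, zb))
          : α × (Fin n → Option β) × ((Fin n → Option α) × (Fin n → Option β))).2.2)
      = (∏ j, pr p (fun ω => phi1 i a za j (X j ω) ∧ psi1 i cc zb j (Y j ω)))
        * ∏ j, pr p (fun ω => phi2 i za j (X j ω) ∧ psi2 i zb j (Y j ω)) := by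
        rw [e1, e2, p1, p2]
    _ = ∏ j, (pr p (fun ω => phi1 i a za j (X j ω) ∧ psi1 i cc zb j (Y j ω))
        * pr p (fun ω => phi2 i za j (X j ω) ∧ psi2 i zb j (Y j ω))) := by
        rw [Finset.prod_mul_distrib]
    _ = ∏ j, (pr p (fun ω => phi1 i a za j (X j ω) ∧ psi2 i zb j (Y j ω))
        * pr p (fun ω => phi2 i za j (X j ω) ∧ psi1 i cc zb j (Y j ω))) :=
        Finset.prod_congr rfl fun j _ => key j
    _ = (∏ j, pr p (fun ω => phi1 i a za j (X j ω) ∧ psi2 i zb j (Y j ω)))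
        * ∏ j, pr p (fun ω => phi2 i za j (X j ω) ∧ psi1 i cc zb j (Y j ω)) := by
        rw [Finset.prod_mul_distrib]
    _ = _ := by rw [e3, e4, p3, p4]

end Fact

/-- Direct-sum lemma: if the pairs `(X_i, Y_i)` are mutually independent, then
`∑ i, I(X_i ; R | X_{<i}, Y_{≥i}) ≤ I(X ; R | Y)`.  Here the prefix `X_{<i}` and the
suffix `Y_{≥i}` are encoded as `Option`-valued tuples. -/
theorem stmt9 {Ω α β ρ : Type*} [Fintype Ω] [Fintype α] [Fintype β] [Fintype ρ]
    [DecidableEq α] [DecidableEq β]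
    (n : ℕ) (p : Ω → ℝ) (X : Fin n → Ω → α) (Y : Fin n → Ω → β) (R : Ω → ρ)
    (hp : ∀ ω, 0 ≤ p ω) (hsum : ∑ ω, p ω = 1)
    (hindep : ∀ (a : Fin n → α) (b : Fin n → β),
      pr p (fun ω => ∀ i, X i ω = a i ∧ Y i ω = b i)
        = ∏ i, pr p (fun ω => X i ω = a i ∧ Y i ω = b i)) :
    ∑ i : Fin n, condMI p (X i) R (fun ω =>
        ( (fun j : Fin n => if (j:ℕ) < (i:ℕ) then some (X j ω) else none),
          (fun j : Fin n => if (i:ℕ) ≤ (j:ℕ) then some (Y j ω) else none) ))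
      ≤ condMI p (fun ω => (fun i => X i ω)) R (fun ω => (fun i => Y i ω)) := by
  classical
  show (∑ i : Fin n, condMI p (X i) R (fun ω => (pfx X (i:ℕ) ω, sfx Y (i:ℕ) ω)))
      ≤ condMI p (fun ω => (fun i => X i ω)) R (fun ω => (fun i => Y i ω))
  have hc1 : condEnt p (fun ω => (fun i => X i ω)) (fun ω => (fun i => Y i ω))
      = ∑ i : Fin n, condEnt p (X i) (fun ω => (pfx X (i:ℕ) ω, fun k => Y k ω)) :=
    chain_rule p X _
  have hc2 : condEnt p (fun ω => (fun i => X i ω)) (fun ω => (R ω, fun k => Y k ω))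
      = ∑ i : Fin n, condEnt p (X i) (fun ω => (pfx X (i:ℕ) ω, (R ω, fun k => Y k ω))) :=
    chain_rule p X _
  have hsw : ∀ i : Fin n, condEnt p (X i) (fun ω => (R ω, (pfx X (i:ℕ) ω, fun k => Y k ω)))
      = condEnt p (X i) (fun ω => (pfx X (i:ℕ) ω, (R ω, fun k => Y k ω))) := by
    intro i
    exact condEnt_congr_inj p
      (g := fun ω => (pfx X (i:ℕ) ω, (R ω, fun k => Y k ω)))
      (e := fun z : (Fin n → Option α) × (ρ × (Fin n → β)) => (z.2.1, (z.1, z.2.2)))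
      (fun ω₁ ω₂ hh => by
        simp only [Prod.mk.injEq] at hh ⊢
        exact ⟨hh.2.1, hh.1, hh.2.2⟩)
  have hR : condMI p (fun ω => (fun i => X i ω)) R (fun ω => (fun i => Y i ω))
      = ∑ i : Fin n, condMI p (X i) R (fun ω => (pfx X (i:ℕ) ω, fun k => Y k ω)) := by
    calc condMI p (fun ω => (fun i => X i ω)) R (fun ω => (fun i => Y i ω))
        = condEnt p (fun ω => (fun i => X i ω)) (fun ω => (fun i => Y i ω))
          - condEnt p (fun ω => (fun i => X i ω)) (fun ω => (R ω, fun k => Y k ω)) := rfl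
      _ = (∑ i : Fin n, condEnt p (X i) (fun ω => (pfx X (i:ℕ) ω, fun k => Y k ω)))
          - ∑ i : Fin n, condEnt p (X i) (fun ω => (pfx X (i:ℕ) ω, (R ω, fun k => Y k ω))) := by
          rw [hc1, hc2]
      _ = ∑ i : Fin n, (condEnt p (X i) (fun ω => (pfx X (i:ℕ) ω, fun k => Y k ω))
          - condEnt p (X i) (fun ω => (pfx X (i:ℕ) ω, (R ω, fun k => Y k ω)))) :=
          (Finset.sum_sub_distrib _ _).symm
      _ = ∑ i : Fin n, condMI p (X i) R (fun ω => (pfx X (i:ℕ) ω, fun k => Y k ω)) :=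
          Finset.sum_congr rfl fun i _ => by
            rw [show condMI p (X i) R (fun ω => (pfx X (i:ℕ) ω, fun k => Y k ω))
              = condEnt p (X i) (fun ω => (pfx X (i:ℕ) ω, fun k => Y k ω))
                - condEnt p (X i) (fun ω => (R ω, (pfx X (i:ℕ) ω, fun k => Y k ω))) from rfl,
              hsw i]
  rw [hR]
  refine Finset.sum_le_sum fun i _ => ?_
  have F1 : condEnt p (X i) (fun ω => (pfx X (i:ℕ) ω, sfx Y (i:ℕ) ω))
      - condEnt p (X i) (fun ω => (pfx Y (i:ℕ) ω, (pfx X (i:ℕ) ω, sfx Y (i:ℕ) ω))) = 0 :=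
    condMI_eq_zero p (X i) (fun ω => pfx Y (i:ℕ) ω)
      (fun ω => (pfx X (i:ℕ) ω, sfx Y (i:ℕ) ω)) hp (fact_lemma p X Y hindep i)
  have F2 : (0:ℝ) ≤ condEnt p (X i) (fun ω => (R ω, (pfx X (i:ℕ) ω, sfx Y (i:ℕ) ω)))
      - condEnt p (X i) (fun ω => (pfx Y (i:ℕ) ω, (R ω, (pfx X (i:ℕ) ω, sfx Y (i:ℕ) ω)))) :=
    condMI_nonneg p (X i) (fun ω => pfx Y (i:ℕ) ω)
      (fun ω => (R ω, (pfx X (i:ℕ) ω, sfx Y (i:ℕ) ω))) hp hsum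
  have F3 : condEnt p (X i) (fun ω => (pfx Y (i:ℕ) ω, (pfx X (i:ℕ) ω, sfx Y (i:ℕ) ω)))
      = condEnt p (X i) (fun ω => (pfx X (i:ℕ) ω, fun k => Y k ω)) :=
    condEnt_congr_inj p
      (g := fun ω => (pfx X (i:ℕ) ω, fun k => Y k ω))
      (e := fun z : (Fin n → Option α) × (Fin n → β) =>
        ((fun j : Fin n => if (j:ℕ) < (i:ℕ) then some (z.2 j) else none),
         (z.1, (fun j : Fin n => if (i:ℕ) ≤ (j:ℕ) then some (z.2 j) else none))))
      (fun ω₁ ω₂ hh => by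
        simp only [Prod.mk.injEq] at hh ⊢
        obtain ⟨h1, h2, h3⟩ := hh
        refine ⟨h2, funext fun k => ?_⟩
        by_cases hk : (k:ℕ) < (i:ℕ)
        · have := congrFun h1 k
          rw [if_pos hk, if_pos hk] at this
          exact Option.some.inj this
        · have hk' : (i:ℕ) ≤ (k:ℕ) := by omega
          have := congrFun h3 k
          rw [if_pos hk', if_pos hk'] at this
          exact Option.some.inj this)
  have F4 : condEnt p (X i) (fun ω => (pfx Y (i:ℕ) ω, (R ω, (pfx X (i:ℕ) ω, sfx Y (i:ℕ) ω))))
      = condEnt p (X i) (fun ω => (pfx X (i:ℕ) ω, (R ω, fun k => Y k ω))) :=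
    condEnt_congr_inj p
      (g := fun ω => (pfx X (i:ℕ) ω, (R ω, fun k => Y k ω)))
      (e := fun z : (Fin n → Option α) × (ρ × (Fin n → β)) =>
        ((fun j : Fin n => if (j:ℕ) < (i:ℕ) then some (z.2.2 j) else none),
         (z.2.1, (z.1, (fun j : Fin n => if (i:ℕ) ≤ (j:ℕ) then some (z.2.2 j) else none)))))
      (fun ω₁ ω₂ hh => by
        simp only [Prod.mk.injEq] at hh ⊢
        obtain ⟨h1, h2, h3, h4⟩ := hh
        refine ⟨h3, h2, funext fun k => ?_⟩
        by_cases hk : (k:ℕ) < (i:ℕ)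
        · have := congrFun h1 k
          rw [if_pos hk, if_pos hk] at this
          exact Option.some.inj this
        · have hk' : (i:ℕ) ≤ (k:ℕ) := by omega
          have := congrFun h4 k
          rw [if_pos hk', if_pos hk'] at this
          exact Option.some.inj this)
  have F5 := hsw i
  have gL : condMI p (X i) R (fun ω => (pfx X (i:ℕ) ω, sfx Y (i:ℕ) ω))
      = condEnt p (X i) (fun ω => (pfx X (i:ℕ) ω, sfx Y (i:ℕ) ω))
        - condEnt p (X i) (fun ω => (R ω, (pfx X (i:ℕ) ω, sfx Y (i:ℕ) ω))) := rfl
  have gR : condMI p (X i) R (fun ω => (pfx X (i:ℕ) ω, fun k => Y k ω))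
      = condEnt p (X i) (fun ω => (pfx X (i:ℕ) ω, fun k => Y k ω))
        - condEnt p (X i) (fun ω => (R ω, (pfx X (i:ℕ) ω, fun k => Y k ω))) := rfl
  rw [gL, gR]
  linarith [F1, F2, F3, F4, F5]
end

section
/- Let P = conv{v₁,...,v_s} ⊆ ℝ^d and Q = {x : ⟨a_i, x⟩ ≤ b_i for all i ∈ [t]} ⊆ ℝ^d with P ⊆ Q, and let S be the (nonnegative) slack matrix with S_{ij} = b_i - ⟨a_i, v_j⟩. Then for any polytope K with P ⊆ K ⊆ Q, the extension complexity of K satisfies xc(K) ≥ rk₊(S) - 1. -/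
variable {E : Type*} [NormedAddCommGroup E] [NormedSpace ℝ E]

/-- A finitely generated cone is closed. -/
lemma fg_cone_isClosed : ∀ (m : ℕ) (g : Fin m → E),
    IsClosed {x : E | ∃ l : Fin m → ℝ, (∀ i, 0 ≤ l i) ∧ ∑ i, l i • g i = x} := by
  intro m
  induction m with
  | zero =>
    intro g
    convert isClosed_singleton (x := (0 : E)) using 1
    ext x
    simp
  | succ m ih =>
    intro g
    by_cases hli : LinearIndependent ℝ g
    · -- image of the closed orthant under a closed embedding
      set φ : (Fin (m+1) → ℝ) →ₗ[ℝ] E := Fintype.linearCombination ℝ g with hφ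
      have hφapp : ∀ l, φ l = ∑ i, l i • g i := by
        intro l; simp [hφ, Fintype.linearCombination_apply]
      have hinj : Function.Injective φ := by
        rw [← LinearMap.ker_eq_bot, LinearMap.ker_eq_bot']
        intro l hl
        exact funext fun i => (Fintype.linearIndependent_iff.mp hli l (by rw [← hφapp]; exact hl)) i
      have hce := φ.isClosedEmbedding_of_injective (LinearMap.ker_eq_bot.mpr hinj)
      have : {x : E | ∃ l : Fin (m+1) → ℝ, (∀ i, 0 ≤ l i) ∧ ∑ i, l i • g i = x}
          = φ '' {l | ∀ i, 0 ≤ l i} := by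
        ext x
        constructor
        · rintro ⟨l, hl, rfl⟩; exact ⟨l, hl, (hφapp l)⟩
        · rintro ⟨l, hl, rfl⟩; exact ⟨l, hl, (hφapp l).symm⟩
      rw [this]
      refine hce.isClosedMap _ ?_
      have : {l : Fin (m+1) → ℝ | ∀ i, 0 ≤ l i} = ⋂ i, (fun l : Fin (m+1) → ℝ => l i) ⁻¹' Set.Ici 0 := by
        ext l; simp [Set.mem_iInter]
      rw [this]
      exact isClosed_iInter fun i => isClosed_Ici.preimage (continuous_apply i)
    · obtain ⟨c, hc0, i₁, hci⟩ := Fintype.not_linearIndependent_iff.mp hli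
      -- WLOG there is a positive coefficient
      obtain ⟨c, hc0, i₁, hci⟩ : ∃ c : Fin (m+1) → ℝ, (∑ i, c i • g i = 0) ∧ ∃ i, 0 < c i := by
        rcases lt_trichotomy (c i₁) 0 with h | h | h
        · exact ⟨-c, by simpa using hc0, i₁, by simpa using h⟩
        · exact absurd h hci
        · exact ⟨c, hc0, i₁, h⟩
      have key : {x : E | ∃ l : Fin (m+1) → ℝ, (∀ i, 0 ≤ l i) ∧ ∑ i, l i • g i = x}
          = ⋃ i₀ : Fin (m+1), {x : E | ∃ l : Fin m → ℝ, (∀ i, 0 ≤ l i) ∧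
              ∑ i, l i • g (i₀.succAbove i) = x} := by
        ext x
        simp only [Set.mem_iUnion, Set.mem_setOf_eq]
        constructor
        · rintro ⟨l, hl, rfl⟩
          have hT : (Finset.univ.filter (fun i => 0 < c i)).Nonempty := ⟨i₁, by simp [hci]⟩
          obtain ⟨i₀, hi₀T, hi₀min⟩ := Finset.exists_min_image _ (fun i => l i / c i) hT
          simp only [Finset.mem_filter] at hi₀T
          have hci₀ : 0 < c i₀ := hi₀T.2
          set τ := l i₀ / c i₀ with hτ
          have hτ0 : 0 ≤ τ := div_nonneg (hl i₀) hci₀.le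
          set l' : Fin (m+1) → ℝ := fun i => l i - τ * c i with hl'
          have hl'0 : ∀ i, 0 ≤ l' i := by
            intro i
            by_cases h : 0 < c i
            · have := hi₀min i (Finset.mem_filter.mpr ⟨Finset.mem_univ i, h⟩)
              have : τ * c i ≤ l i := (le_div_iff₀ h).mp this
              simpa [hl'] using this
            · push_neg at h
              have : τ * c i ≤ 0 := mul_nonpos_of_nonneg_of_nonpos hτ0 h
              have := sub_nonneg.mpr (this.trans (hl i))
              simpa [hl'] using (by nlinarith [hl i] : 0 ≤ l i - τ * c i)
          have hl'i₀ : l' i₀ = 0 := by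
            simp [hl', hτ, div_mul_cancel₀ (l i₀) hci₀.ne']
          have hsum' : ∑ i, l' i • g i = ∑ i, l i • g i := by
            simp only [hl', sub_smul, Finset.sum_sub_distrib, mul_smul]
            rw [← Finset.smul_sum, hc0, smul_zero, sub_zero]
          refine ⟨i₀, fun i => l' (i₀.succAbove i), fun i => hl'0 _, ?_⟩
          rw [← hsum', Fin.sum_univ_succAbove (fun i => l' i • g i) i₀, hl'i₀, zero_smul, zero_add]
        · rintro ⟨i₀, l, hl, rfl⟩
          refine ⟨(Fin.insertNth i₀ (0:ℝ) l : Fin (m+1) → ℝ), ?_, ?_⟩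
          · rw [Fin.forall_iff_succAbove i₀]
            refine ⟨by simp, fun j => by simpa using hl j⟩
          · rw [Fin.sum_univ_succAbove
              (fun i => (Fin.insertNth i₀ (0:ℝ) l : Fin (m+1) → ℝ) i • g i) i₀]
            simp
      rw [key]
      exact isClosed_iUnion_of_finite fun i₀ => ih _

section Farkas

variable {n : ℕ}

/-- Affine Farkas lemma. -/
lemma affine_farkas (n f : ℕ) (A : Fin f → Fin n → ℝ) (b : Fin f → ℝ)
    (c : Fin n → ℝ) (δ : ℝ)
    (hne : ∃ y : Fin n → ℝ, ∀ i, ∑ k, A i k * y k ≤ b i)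
    (h : ∀ y : Fin n → ℝ, (∀ i, ∑ k, A i k * y k ≤ b i) → ∑ k, c k * y k ≤ δ) :
    ∃ (lam : Fin f → ℝ) (μ : ℝ), (∀ i, 0 ≤ lam i) ∧ 0 ≤ μ ∧
      (∀ k, ∑ i, lam i * A i k = c k) ∧ ∑ i, lam i * b i + μ = δ := by
  classical
  set G : Fin (f + 1) → (Fin n → ℝ) × ℝ := Fin.snoc (fun i => (A i, b i)) ((0 : Fin n → ℝ), (1 : ℝ)) with hG
  set C : Set ((Fin n → ℝ) × ℝ) := {x | ∃ l : Fin (f+1) → ℝ, (∀ i, 0 ≤ l i) ∧ ∑ i, l i • G i = x} with hC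
  have hclosed : IsClosed C := fg_cone_isClosed _ _
  have hconv : Convex ℝ C := by
    rintro x ⟨lx, hlx, rfl⟩ y ⟨ly, hly, rfl⟩ p q hp hq hpq
    refine ⟨fun i => p * lx i + q * ly i,
      fun i => add_nonneg (mul_nonneg hp (hlx i)) (mul_nonneg hq (hly i)), ?_⟩
    simp only [add_smul, mul_smul, Finset.sum_add_distrib, ← Finset.smul_sum]
  have hsmul : ∀ (r : ℝ) (x : (Fin n → ℝ) × ℝ), 0 ≤ r → x ∈ C → r • x ∈ C := by
    rintro r x hr ⟨l, hl, rfl⟩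
    exact ⟨fun i => r * l i, fun i => mul_nonneg hr (hl i),
      by simp only [mul_smul, ← Finset.smul_sum]⟩
  have hmemG : ∀ i, G i ∈ C := by
    intro i
    refine ⟨Pi.single i 1, fun j => by simp [Pi.single_apply]; split <;> norm_num, ?_⟩
    simp [Pi.single_apply, ite_smul]
  -- main claim: (c, δ) ∈ C
  have hmem : ((c, δ) : (Fin n → ℝ) × ℝ) ∈ C := by
    by_contra hnot
    obtain ⟨g, u, hgC, hgx⟩ := geometric_hahn_banach_closed_point hconv hclosed hnot
    have h0C : (0 : (Fin n → ℝ) × ℝ) ∈ C := ⟨0, fun i => le_rfl, by simp⟩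
    have hu0 : 0 < u := by simpa using hgC 0 h0C
    have hgle : ∀ x ∈ C, g x ≤ 0 := by
      intro x hx
      by_contra hpos
      push_neg at hpos
      have : ((u + 1) / g x) • x ∈ C := hsmul _ _ (by positivity) hx
      have := hgC _ this
      rw [map_smul, smul_eq_mul, div_mul_cancel₀ _ hpos.ne'] at this
      linarith
    -- notation
    set w : Fin n → ℝ := fun k => g ((Pi.single k 1 : Fin n → ℝ), 0) with hw
    have hexp : ∀ z : Fin n → ℝ, g ((z, 0) : (Fin n → ℝ) × ℝ) = ∑ k, z k * w k := by
      intro z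
      have hz : ((z, 0) : (Fin n → ℝ) × ℝ) = ∑ k, z k • (((Pi.single k 1 : Fin n → ℝ), 0) : (Fin n → ℝ) × ℝ) := by
        have h1 : (∑ k, z k • (((Pi.single k 1 : Fin n → ℝ), (0:ℝ)) : (Fin n → ℝ) × ℝ)).1 = z := by
          rw [Prod.fst_sum]
          ext j
          rw [Finset.sum_apply]
          simp [Prod.smul_fst, Pi.single_apply, mul_comm]
        have h2 : (∑ k, z k • (((Pi.single k 1 : Fin n → ℝ), (0:ℝ)) : (Fin n → ℝ) × ℝ)).2 = 0 := by
          rw [Prod.snd_sum]; simp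
        exact Prod.ext h1.symm h2.symm
      calc g ((z, 0) : (Fin n → ℝ) × ℝ) = ∑ k, g (z k • (((Pi.single k 1 : Fin n → ℝ), 0) : (Fin n → ℝ) × ℝ)) := by
            rw [hz, map_sum]
        _ = ∑ k, z k * w k := Finset.sum_congr rfl fun k _ => by
            rw [g.map_smul, smul_eq_mul, hw]
    set r : ℝ := g (((0 : Fin n → ℝ), 1) : (Fin n → ℝ) × ℝ) with hr
    have hrle : r ≤ 0 := hgle _ (by simpa [hG, Fin.snoc_last] using hmemG (Fin.last f))
    have hAle : ∀ i : Fin f, g ((A i, 0) : (Fin n → ℝ) × ℝ) + b i * r ≤ 0 := by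
      intro i
      have h1 : g ((A i, b i) : (Fin n → ℝ) × ℝ) ≤ 0 := by
        simpa [hG, Fin.snoc_castSucc] using hgle _ (hmemG (Fin.castSucc i))
      have h2 : ((A i, b i) : (Fin n → ℝ) × ℝ) = ((A i, 0) : (Fin n → ℝ) × ℝ) + b i • (((0 : Fin n → ℝ), 1) : (Fin n → ℝ) × ℝ) := by
        simp [Prod.ext_iff]
      rw [h2, map_add, map_smul, smul_eq_mul] at h1
      linarith
    have hcd : 0 < g ((c, δ) : (Fin n → ℝ) × ℝ) := lt_trans hu0 hgx
    have hcd' : g ((c, δ) : (Fin n → ℝ) × ℝ) = g ((c, 0) : (Fin n → ℝ) × ℝ) + δ * r := by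
      have : ((c, δ) : (Fin n → ℝ) × ℝ) = ((c, 0) : (Fin n → ℝ) × ℝ) + δ • (((0 : Fin n → ℝ), 1) : (Fin n → ℝ) × ℝ) := by
        simp [Prod.ext_iff]
      rw [this, map_add, map_smul, smul_eq_mul]
    rcases eq_or_lt_of_le hrle with hr0 | hrneg
    · -- r = 0 : unbounded direction
      obtain ⟨z₀, hz₀⟩ := hne
      have hgc : 0 < g ((c, 0) : (Fin n → ℝ) × ℝ) := by
        rw [hcd', hr0, mul_zero, add_zero] at hcd; exact hcd
      set s : ℝ := max 0 ((δ - ∑ k, c k * z₀ k + 1) / g ((c, 0) : (Fin n → ℝ) × ℝ)) with hs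
      have hs0 : 0 ≤ s := le_max_left _ _
      have hfeas : ∀ i, ∑ k, A i k * (z₀ + s • w) k ≤ b i := by
        intro i
        have hAw : ∑ k, A i k * w k ≤ 0 := by
          have := hAle i
          rw [hexp (A i), hr0, mul_zero, add_zero] at this
          exact this
        have : ∑ k, A i k * (z₀ + s • w) k
            = ∑ k, A i k * z₀ k + s * ∑ k, A i k * w k := by
          rw [Finset.mul_sum, ← Finset.sum_add_distrib]
          congr 1; ext k; simp [Pi.add_apply, Pi.smul_apply, smul_eq_mul]; ring
        rw [this]
        nlinarith [hz₀ i]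
      have hobj := h _ hfeas
      have hsplit : ∑ k, c k * (z₀ + s • w) k
          = ∑ k, c k * z₀ k + s * g ((c, 0) : (Fin n → ℝ) × ℝ) := by
        rw [hexp c, Finset.mul_sum, ← Finset.sum_add_distrib]
        congr 1; ext k; simp [Pi.add_apply, Pi.smul_apply, smul_eq_mul]; ring
      rw [hsplit] at hobj
      have hsge : (δ - ∑ k, c k * z₀ k + 1) / g ((c, 0) : (Fin n → ℝ) × ℝ) ≤ s := le_max_right _ _
      have : δ - ∑ k, c k * z₀ k + 1 ≤ s * g ((c, 0) : (Fin n → ℝ) × ℝ) := by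
        rw [div_le_iff₀ hgc] at hsge; linarith
      linarith
    · -- r < 0 : build a feasible point violating the objective bound
      set z : Fin n → ℝ := fun k => w k / (-r) with hz
      have hrpos : 0 < -r := by linarith
      have hfeas : ∀ i, ∑ k, A i k * z k ≤ b i := by
        intro i
        have h1 := hAle i
        rw [hexp (A i)] at h1
        have : ∑ k, A i k * z k = (∑ k, A i k * w k) / (-r) := by
          rw [Finset.sum_div]; congr 1; ext k; simp [hz]; ring
        rw [this, div_le_iff₀ hrpos]
        nlinarith
      have hobj := h _ hfeas
      have : ∑ k, c k * z k = (∑ k, c k * w k) / (-r) := by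
        rw [Finset.sum_div]; congr 1; ext k; simp [hz]; ring
      rw [this, div_le_iff₀ hrpos] at hobj
      rw [hcd', hexp c] at hcd
      nlinarith
  -- unpack the membership
  obtain ⟨l, hl, hsum⟩ := hmem
  refine ⟨fun i => l (Fin.castSucc i), l (Fin.last f),
    fun i => hl _, hl _, ?_, ?_⟩
  · intro k
    have h1 : (∑ i, l i • G i).1 k = c k := by rw [hsum]
    rw [Prod.fst_sum] at h1
    rw [Fin.sum_univ_castSucc (fun i => (l i • G i).1)] at h1
    simp only [hG, Fin.snoc_castSucc, Fin.snoc_last, Prod.smul_mk, smul_zero] at h1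
    simpa [Prod.smul_fst, Prod.smul_snd, Finset.sum_apply, smul_eq_mul] using h1
  · have h2 : (∑ i, l i • G i).2 = δ := by rw [hsum]
    rw [Prod.snd_sum] at h2
    rw [Fin.sum_univ_castSucc (fun i => (l i • G i).2)] at h2
    simpa [hG, Fin.snoc_castSucc, Fin.snoc_last, Prod.smul_fst, Prod.smul_snd,
      smul_eq_mul] using h2

end Farkas

/-- Yannakakis/BFPS-style lower bound: if `P = conv{v_j} ⊆ K ⊆ Q = {x : ⟨a_i,x⟩ ≤ b_i}`
and `K` has an extended formulation with `f` inequalities (a polyhedron in `ℝ^{d'}`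
projecting linearly onto `K`), then the slack matrix `S_{ij} = b_i - ⟨a_i, v_j⟩`
admits a nonnegative factorization of inner dimension `f + 1`; i.e.
`xc(K) ≥ rk₊(S) - 1`. -/
theorem stmt16 (d s t : ℕ) (v : Fin s → (Fin d → ℝ))
    (a : Fin t → (Fin d → ℝ)) (b : Fin t → ℝ)
    (hPQ : ∀ (j : Fin s) (i : Fin t), ∑ k, a i k * v j k ≤ b i)
    (K : Set (Fin d → ℝ))
    (hPK : convexHull ℝ (Set.range v) ⊆ K)
    (hKQ : K ⊆ {x | ∀ i : Fin t, ∑ k, a i k * x k ≤ b i})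
    (d' f : ℕ) (A' : Fin f → (Fin d' → ℝ)) (b' : Fin f → ℝ)
    (π : (Fin d' → ℝ) →ₗ[ℝ] (Fin d → ℝ))
    (hEF : π '' {y | ∀ i : Fin f, ∑ k, A' i k * y k ≤ b' i} = K) :
    ∃ (F : Fin t → Fin (f + 1) → ℝ) (G : Fin (f + 1) → Fin s → ℝ),
      (∀ i l, 0 ≤ F i l) ∧ (∀ l j, 0 ≤ G l j) ∧
      (∀ i j, b i - ∑ k, a i k * v j k = ∑ l, F i l * G l j) := by
  classical
  rcases Nat.eq_zero_or_pos s with hs | hs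
  · exact ⟨0, 0, fun i l => le_rfl, fun l j => le_rfl,
      fun i j => absurd j.isLt (by omega)⟩
  -- the polyhedron Q' is nonempty
  have hvK : ∀ j : Fin s, v j ∈ K := fun j =>
    hPK (subset_convexHull ℝ _ ⟨j, rfl⟩)
  have hQ'ne : ∃ y : Fin d' → ℝ, ∀ i, ∑ k, A' i k * y k ≤ b' i := by
    have := hvK ⟨0, hs⟩
    rw [← hEF] at this
    obtain ⟨y, hy, -⟩ := this
    exact ⟨y, hy⟩
  -- the objective functionals pulled back along π
  set c : Fin t → Fin d' → ℝ :=
    fun i k => ∑ m, a i m * π (Pi.single k 1) m with hc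
  have hkey : ∀ (i : Fin t) (y : Fin d' → ℝ),
      ∑ k, c i k * y k = ∑ m, a i m * π y m := by
    intro i y
    have hy : y = ∑ k, y k • (Pi.single k 1 : Fin d' → ℝ) := by
      ext j
      rw [Finset.sum_apply]
      simp [Pi.single_apply, mul_comm]
    have hπy : π y = ∑ k, y k • π (Pi.single k 1 : Fin d' → ℝ) := by
      conv_lhs => rw [hy]
      rw [map_sum]
      simp only [map_smul]
    rw [hπy]
    calc ∑ k, c i k * y k
        = ∑ k, ∑ m, a i m * π (Pi.single k 1) m * y k := by
          refine Finset.sum_congr rfl fun k _ => ?_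
          simp only [hc]
          rw [Finset.sum_mul]
      _ = ∑ m, ∑ k, a i m * π (Pi.single k 1) m * y k := Finset.sum_comm
      _ = ∑ m, a i m * (∑ k, y k • π (Pi.single k 1 : Fin d' → ℝ)) m := by
          refine Finset.sum_congr rfl fun m _ => ?_
          rw [Finset.sum_apply, Finset.mul_sum]
          refine Finset.sum_congr rfl fun k _ => ?_
          simp only [Pi.smul_apply, smul_eq_mul]
          ring
  -- Farkas for each inequality of Q
  have H : ∀ i : Fin t, ∃ (lam : Fin f → ℝ) (μ : ℝ), (∀ l, 0 ≤ lam l) ∧ 0 ≤ μ ∧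
      (∀ k, ∑ l, lam l * A' l k = c i k) ∧ ∑ l, lam l * b' l + μ = b i := by
    intro i
    refine affine_farkas d' f A' b' (c i) (b i) hQ'ne ?_
    intro y hyQ'
    rw [hkey]
    have : π y ∈ K := by rw [← hEF]; exact ⟨y, hyQ', rfl⟩
    exact hKQ this i
  choose lam μ hlam hμ hA hb using H
  -- preimages of the vertices
  have Hy : ∀ j : Fin s, ∃ y : Fin d' → ℝ,
      (∀ l, ∑ k, A' l k * y k ≤ b' l) ∧ π y = v j := by
    intro j
    have := hvK j
    rw [← hEF] at this
    obtain ⟨y, hy, hπ⟩ := this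
    exact ⟨y, hy, hπ⟩
  choose y hy hπy using Hy
  refine ⟨fun i => Fin.snoc (lam i) (μ i),
    fun l j => (Fin.snoc (fun l' => b' l' - ∑ k, A' l' k * y j k) (1 : ℝ) :
      Fin (f+1) → ℝ) l,
    ?_, ?_, ?_⟩
  · intro i l
    induction l using Fin.lastCases with
    | last => simpa using hμ i
    | cast l' => simpa using hlam i l'
  · intro l j
    induction l using Fin.lastCases with
    | last => simp
    | cast l' => simpa using hy j l'
  · intro i j
    rw [Fin.sum_univ_castSucc]
    simp only [Fin.snoc_castSucc, Fin.snoc_last, mul_one]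
    have h1 : ∑ k, a i k * v j k = ∑ k, c i k * y j k := by
      rw [hkey, hπy]
    rw [h1, ← hb i]
    have h2 : ∑ k, c i k * y j k = ∑ l, lam i l * ∑ k, A' l k * y j k := by
      calc ∑ k, c i k * y j k = ∑ k, ∑ l, lam i l * A' l k * y j k := by
            refine Finset.sum_congr rfl fun k _ => ?_
            rw [← hA i k, Finset.sum_mul]
        _ = ∑ l, ∑ k, lam i l * A' l k * y j k := Finset.sum_comm
        _ = ∑ l, lam i l * ∑ k, A' l k * y j k := by
            refine Finset.sum_congr rfl fun l _ => ?_
            rw [Finset.mul_sum]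
            exact Finset.sum_congr rfl fun k _ => by ring
    rw [h2]
    rw [show (∑ l, lam i l * b' l + μ i) - ∑ l, lam i l * ∑ k, A' l k * y j k
        = ∑ l, (lam i l * b' l - lam i l * ∑ k, A' l k * y j k) + μ i by
      rw [Finset.sum_sub_distrib]; ring]
    congr 1
    refine Finset.sum_congr rfl fun l _ => by ring
end
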